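/- Let $1 \le t \le k_1 \le \cdots \le k_r \le n$ and suppose $n$ is sufficiently large in terms of $k_{r-1}, k_r, t$. Let $\mathcal{F}_1, \dots, \mathcal{F}_r$ be families of subsets of $[n]$ with each member of $\mathcal{F}_i$ of size at most $k_i$. Suppose that for all $i \ne j$ and all $A \in \mathcal{F}_i$, $B \in \mathcal{F}_j$ with $|A \cap B| < t$, we have $|A \triangle B| \le \min\{k_i, k_j\} - t$. Then $\prod_{i=1}^r |\mathcal{F}_i| \le \prod_{i=1}^r \left( \sum_{j=0}^{k_i - t} \binom{n-t}{k_i - t - j} \right)$. -/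

import Mathlib

namespace SF
open Finset
open scoped symmDiff


variable {n : ℕ}

/-- Master counting lemma: if `H` injects into subsets of `U` of size at most `m`,
then `H.card` is at most the number of such subsets. -/
lemma card_le_sum_choose_of_inj (H : Finset (Finset (Fin n))) (U : Finset (Fin n))
    (f : Finset (Fin n) → Finset (Fin n)) (m : ℕ)
    (hsub : ∀ A ∈ H, f A ⊆ U) (hm : ∀ A ∈ H, (f A).card ≤ m)
    (hinj : ∀ A ∈ H, ∀ B ∈ H, f A = f B → A = B) :
    H.card ≤ ∑ d ∈ Finset.range (m+1), U.card.choose d := by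
  have hcard : ((Finset.range (m+1)).sigma (fun d => U.powersetCard d)).card
      = ∑ d ∈ Finset.range (m+1), U.card.choose d := by
    rw [Finset.card_sigma]; simp [Finset.card_powersetCard]
  rw [← hcard]
  apply Finset.card_le_card_of_injOn (fun A => ⟨(f A).card, f A⟩)
  · intro A hA
    simp only [Finset.mem_coe, Finset.mem_sigma, Finset.mem_range, Finset.mem_powersetCard]
    exact ⟨Nat.lt_succ_of_le (hm A hA), hsub A hA, trivial⟩
  · intro A hA B hB hEq
    exact hinj A hA B hB (eq_of_heq (Sigma.mk.inj_iff.mp hEq).2)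

lemma sum_choose_le_pow (hn : 1 ≤ n) (m : ℕ) :
    ∑ d ∈ Finset.range (m+1), n.choose d ≤ (m+1) * n^m := by
  calc ∑ d ∈ Finset.range (m+1), n.choose d ≤ ∑ _d ∈ Finset.range (m+1), n^m := by
        apply Finset.sum_le_sum
        intro d hd
        exact (Nat.choose_le_pow n d).trans
          (Nat.pow_le_pow_right hn (Nat.lt_succ_iff.mp (Finset.mem_range.mp hd)))
    _ = (m+1) * n^m := by rw [Finset.sum_const, Finset.card_range, smul_eq_mul]

lemma card_le_pow_of_inj (H : Finset (Finset (Fin n)))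
    (f : Finset (Fin n) → Finset (Fin n)) (m : ℕ)
    (hm : ∀ A ∈ H, (f A).card ≤ m)
    (hinj : ∀ A ∈ H, ∀ B ∈ H, f A = f B → A = B) (hn : 1 ≤ n) :
    H.card ≤ (m+1) * n^m := by
  have h1 := card_le_sum_choose_of_inj H Finset.univ f m (fun A _ => Finset.subset_univ _) hm hinj
  have h2 : (Finset.univ : Finset (Fin n)).card = n := by simp
  rw [h2] at h1
  exact h1.trans (sum_choose_le_pow hn m)

/-- Master splitting lemma: inject into (subset of X) × (small set). -/
lemma card_le_split (H : Finset (Finset (Fin n))) (X : Finset (Fin n))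
    (f g : Finset (Fin n) → Finset (Fin n)) (m : ℕ)
    (hf : ∀ A ∈ H, f A ⊆ X) (hg : ∀ A ∈ H, (g A).card ≤ m)
    (hinj : ∀ A ∈ H, ∀ B ∈ H, f A = f B → g A = g B → A = B) (hn : 1 ≤ n) :
    H.card ≤ 2^(X.card) * ((m+1) * n^m) := by
  have hcard : (X.powerset ×ˢ ((Finset.range (m+1)).sigma
      (fun d => (Finset.univ : Finset (Fin n)).powersetCard d))).card
      = 2^(X.card) * ∑ d ∈ Finset.range (m+1), n.choose d := by
    rw [Finset.card_product, Finset.card_powerset, Finset.card_sigma]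
    simp [Finset.card_powersetCard]
  have step : H.card ≤ 2^(X.card) * ∑ d ∈ Finset.range (m+1), n.choose d := by
    rw [← hcard]
    apply Finset.card_le_card_of_injOn (fun A => (f A, ⟨(g A).card, g A⟩))
    · intro A hA
      simp only [Finset.mem_coe, Finset.mem_product, Finset.mem_powerset, Finset.mem_sigma, Finset.mem_range,
        Finset.mem_powersetCard]
      exact ⟨hf A hA, Nat.lt_succ_of_le (hg A hA), Finset.subset_univ _, trivial⟩
    · intro A hA B hB hEq
      have h1 : f A = f B := congrArg Prod.fst hEq
      have h2 := congrArg Prod.snd hEq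
      exact hinj A hA B hB h1 (eq_of_heq (Sigma.mk.inj_iff.mp h2).2)
  exact step.trans (Nat.mul_le_mul_left _ (sum_choose_le_pow hn m))

/-- Counting sets in a symmetric-difference ball. -/
lemma card_ball (H : Finset (Finset (Fin n))) (B0 : Finset (Fin n)) (m : ℕ)
    (h : ∀ A ∈ H, (A ∆ B0).card ≤ m) (hn : 1 ≤ n) :
    H.card ≤ (m+1) * n^m := by
  apply card_le_pow_of_inj H (fun A => A ∆ B0) m h _ hn
  intro A _ B _ hEq
  have := congrArg (fun S => S ∆ B0) hEq
  simpa [symmDiff_symmDiff_cancel_right] using this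

/-- Counting sets in a ball whose difference contains a fixed marked element. -/
lemma card_marked_ball (H : Finset (Finset (Fin n))) (B0 : Finset (Fin n)) (x : Fin n) (c : ℕ)
    (h : ∀ A ∈ H, x ∈ B0 ∆ A ∧ (B0 ∆ A).card ≤ c + 1) (hn : 1 ≤ n) :
    H.card ≤ (c+1) * n^c := by
  apply card_le_pow_of_inj H (fun A => (B0 ∆ A).erase x) c _ _ hn
  · intro A hA
    have := Finset.card_erase_of_mem (h A hA).1
    have h2 := (h A hA).2
    omega
  · intro A hA B hB hEq
    try dsimp only at hEq
    have h1 : B0 ∆ A = B0 ∆ B := by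
      rw [← Finset.insert_erase (h A hA).1, ← Finset.insert_erase (h B hB).1, hEq]
    have := congrArg (fun S => B0 ∆ S) h1
    simpa [symmDiff_symmDiff_cancel_left] using this

/-- Counting sets in a ball whose difference meets a fixed set `S`. -/
lemma card_ball_hit (H : Finset (Finset (Fin n))) (B0 S : Finset (Fin n)) (c : ℕ)
    (h : ∀ A ∈ H, (B0 ∆ A).card ≤ c + 1 ∧ ((B0 ∆ A) ∩ S).Nonempty) (hn : 1 ≤ n) :
    H.card ≤ S.card * ((c+1) * n^c) := by
  classical
  have hsub : H ⊆ S.biUnion (fun x => H.filter (fun A => x ∈ B0 ∆ A)) := by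
    intro A hA
    obtain ⟨x, hx⟩ := (h A hA).2
    rw [Finset.mem_inter] at hx
    exact Finset.mem_biUnion.mpr ⟨x, hx.2, Finset.mem_filter.mpr ⟨hA, hx.1⟩⟩
  calc H.card ≤ (S.biUnion (fun x => H.filter (fun A => x ∈ B0 ∆ A))).card :=
        Finset.card_le_card hsub
    _ ≤ ∑ x ∈ S, (H.filter (fun A => x ∈ B0 ∆ A)).card := Finset.card_biUnion_le
    _ ≤ ∑ _x ∈ S, (c+1) * n^c := by
        apply Finset.sum_le_sum
        intro x _
        apply card_marked_ball _ B0 x c _ hn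
        intro A hA
        rw [Finset.mem_filter] at hA
        exact ⟨hA.2, (h A hA.1).1⟩
    _ = S.card * ((c+1) * n^c) := by rw [Finset.sum_const, smul_eq_mul]

/-- Counting supersets of a fixed set. -/
lemma card_superset (H : Finset (Finset (Fin n))) (X : Finset (Fin n)) (c : ℕ)
    (h : ∀ A ∈ H, X ⊆ A ∧ A.card ≤ c) (hn : 1 ≤ n) :
    H.card ≤ (c - X.card + 1) * n^(c - X.card) := by
  apply card_le_pow_of_inj H (fun A => A \ X) (c - X.card) _ _ hn
  · intro A hA
    rw [Finset.card_sdiff_of_subset (h A hA).1]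
    have := (h A hA).2
    omega
  · intro A hA B hB hEq
    try dsimp only at hEq
    rw [← Finset.union_sdiff_of_subset (h A hA).1, ← Finset.union_sdiff_of_subset (h B hB).1, hEq]

/-- Exact counting of supersets of a fixed set: the bound for centred families. -/
lemma card_superset_choose (H : Finset (Finset (Fin n))) (X : Finset (Fin n)) (c : ℕ)
    (h : ∀ A ∈ H, X ⊆ A ∧ A.card ≤ c) :
    H.card ≤ ∑ d ∈ Finset.range (c - X.card + 1), (n - X.card).choose d := by
  have hU : (Finset.univ \ X).card = n - X.card := by
    rw [Finset.card_sdiff_of_subset (Finset.subset_univ X)]; simp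
  rw [← hU]
  apply card_le_sum_choose_of_inj H (Finset.univ \ X) (fun A => A \ X) (c - X.card)
  · intro A _
    exact Finset.sdiff_subset_sdiff (Finset.subset_univ _) (le_refl _)
  · intro A hA
    rw [Finset.card_sdiff_of_subset (h A hA).1]
    have := (h A hA).2
    omega
  · intro A hA B hB hEq
    try dsimp only at hEq
    rw [← Finset.union_sdiff_of_subset (h A hA).1, ← Finset.union_sdiff_of_subset (h B hB).1, hEq]

/-- Counting sets of size ≤ c having at least τ elements in a fixed set X. -/
lemma card_tint (H : Finset (Finset (Fin n))) (X : Finset (Fin n)) (τ c : ℕ)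
    (hc : ∀ A ∈ H, A.card ≤ c) (ht : ∀ A ∈ H, τ ≤ (A ∩ X).card) (hn : 1 ≤ n) :
    H.card ≤ 2^(X.card) * ((c - τ + 1) * n^(c - τ)) := by
  classical
  set pick : Finset (Fin n) → Finset (Fin n) := fun A =>
    if h : τ ≤ (A ∩ X).card then (Finset.exists_subset_card_eq h).choose else ∅ with hpick
  have hspec : ∀ A ∈ H, pick A ⊆ A ∩ X ∧ (pick A).card = τ := by
    intro A hA
    have h := ht A hA
    rw [hpick]
    simp only [h, dif_pos]
    exact ⟨(Finset.exists_subset_card_eq h).choose_spec.1,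
      (Finset.exists_subset_card_eq h).choose_spec.2⟩
  apply card_le_split H X pick (fun A => A \ pick A) (c - τ) _ _ _ hn
  · intro A hA
    exact ((hspec A hA).1).trans Finset.inter_subset_right
  · intro A hA
    have h1 : pick A ⊆ A := ((hspec A hA).1).trans Finset.inter_subset_left
    rw [Finset.card_sdiff_of_subset h1, (hspec A hA).2]
    have := hc A hA
    omega
  · intro A hA B hB h1 h2
    try dsimp only at h2
    have hA1 : pick A ⊆ A := ((hspec A hA).1).trans Finset.inter_subset_left
    have hB1 : pick B ⊆ B := ((hspec B hB).1).trans Finset.inter_subset_left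
    calc A = pick A ∪ (A \ pick A) := (Finset.union_sdiff_of_subset hA1).symm
    _ = pick B ∪ (B \ pick B) := by rw [h2, h1]
    _ = B := Finset.union_sdiff_of_subset hB1

open Finset
open scoped symmDiff


/-- The largeness constant. -/
def Wc (b : ℕ) : ℕ := 2 ^ (5*(b+2)*(b+2))

lemma succ_le_two_pow (b : ℕ) : b + 1 ≤ 2 ^ b := Nat.lt_two_pow_self

lemma pow2_mono {a c : ℕ} (h : a ≤ c) : (2:ℕ)^a ≤ 2^c := Nat.pow_le_pow_right (by norm_num) h

lemma const_c1 (b : ℕ) : (b+1) * (2^b + 1) ≤ 2^(5*(b+2)) := by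
  have h1 : b + 1 ≤ 2^b := succ_le_two_pow b
  have h2 : (2:ℕ)^b + 1 ≤ 2^(b+1) := by
    have : (1:ℕ) ≤ 2^b := Nat.one_le_two_pow
    calc (2:ℕ)^b + 1 ≤ 2^b + 2^b := by omega
      _ = 2^(b+1) := by rw [pow_succ]; ring
  calc (b+1) * (2^b+1) ≤ 2^b * 2^(b+1) := Nat.mul_le_mul h1 h2
    _ = 2^(2*b+1) := by rw [← pow_add]; ring_nf
    _ ≤ 2^(5*(b+2)) := pow2_mono (by omega)

lemma const_c2 (b : ℕ) : 2^(5*(b+2)+2) < Wc b := by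
  rw [Wc]
  apply Nat.pow_lt_pow_right (by norm_num)
  nlinarith

lemma const_c3 (b : ℕ) : (b+1) * (3*b+2)^(2*b) < Wc b := by
  have h1 : b + 1 ≤ 2^b := succ_le_two_pow b
  have h2 : 3*b+2 ≤ 2^(b+2) := by
    calc 3*b+2 ≤ 4*(b+1) := by omega
      _ ≤ 4 * 2^b := by have := succ_le_two_pow b; omega
      _ = 2^(b+2) := by rw [pow_add]; ring
  calc (b+1) * (3*b+2)^(2*b) ≤ 2^b * (2^(b+2))^(2*b) :=
        Nat.mul_le_mul h1 (Nat.pow_le_pow_left h2 _)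
    _ = 2^(b + (b+2)*(2*b)) := by rw [← pow_mul, ← pow_add]
    _ < 2^(5*(b+2)*(b+2)) := by
        apply Nat.pow_lt_pow_right (by norm_num)
        nlinarith
    _ = Wc b := rfl

lemma const_c4 (b : ℕ) : b^2 + b + 1 ≤ Wc b := by
  have h1 : b + 1 ≤ 2^b := succ_le_two_pow b
  have : b^2 + b + 1 ≤ (b+1)^2 := by nlinarith
  calc b^2 + b + 1 ≤ (b+1)^2 := this
    _ ≤ (2^b)^2 := Nat.pow_le_pow_left h1 2
    _ = 2^(2*b) := by rw [← pow_mul]; ring_nf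
    _ ≤ Wc b := pow2_mono (by nlinarith)

lemma const_c5 (b : ℕ) : 2^(3*b) * b + 6*b^2 ≤ 2^(5*(b+2)+2) := by
  have h1 : b + 1 ≤ 2^b := succ_le_two_pow b
  have e1 : 2^(3*b) * b ≤ 2^(4*b) := by
    calc 2^(3*b) * b ≤ 2^(3*b) * 2^b := Nat.mul_le_mul_left _ (by omega)
      _ = 2^(4*b) := by rw [← pow_add]; ring_nf
  have e2 : 6*b^2 ≤ 2^(2*b+3) := by
    have : b^2 ≤ (2^b)^2 := Nat.pow_le_pow_left (by omega) 2
    calc 6*b^2 ≤ 8 * (2^b)^2 := by nlinarith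
      _ = 2^(2*b+3) := by rw [← pow_mul]; ring
  have e3 : (2:ℕ)^(4*b) + 2^(2*b+3) ≤ 2^(4*b+4) := by
    have g1 : (2:ℕ)^(4*b) ≤ 2^(4*b+3) := pow2_mono (by omega)
    have g2 : (2:ℕ)^(2*b+3) ≤ 2^(4*b+3) := pow2_mono (by omega)
    calc (2:ℕ)^(4*b) + 2^(2*b+3) ≤ 2^(4*b+3) + 2^(4*b+3) := by omega
      _ = 2^(4*b+4) := by rw [pow_succ]; ring
  calc 2^(3*b)*b + 6*b^2 ≤ 2^(4*b) + 2^(2*b+3) := by omega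
    _ ≤ 2^(4*b+4) := e3
    _ ≤ 2^(5*(b+2)+2) := pow2_mono (by omega)

lemma one_le_pow' (n e : ℕ) (hn : 1 ≤ n) : 1 ≤ n ^ e := Nat.one_le_pow _ _ hn

/-- Crude bound on a family all of whose members t-intersect-or-are-close-to a fixed set. -/
lemma crude_bound {n : ℕ} (b t c : ℕ) (G : Finset (Finset (Fin n))) (A0 : Finset (Fin n))
    (hA0c : A0.card ≤ b) (htc : t ≤ c) (hcb : c ≤ b) (hn1 : 1 ≤ n)
    (hG : ∀ B ∈ G, B.card ≤ c)
    (hcr : ∀ B ∈ G, (A0 ∩ B).card < t → (A0 ∆ B).card ≤ c - t) :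
    G.card ≤ 2^(5*(b+2)) * n^(c-t) := by
  classical
  have hsplit := Finset.card_filter_add_card_filter_not
    (s := G) (p := fun B => t ≤ (A0 ∩ B).card)
  have h1 : (G.filter (fun B => t ≤ (A0 ∩ B).card)).card
      ≤ 2^(A0.card) * ((c - t + 1) * n^(c-t)) := by
    apply card_tint _ A0 t c _ _ hn1
    · intro B hB; exact hG B (Finset.mem_filter.mp hB).1
    · intro B hB
      rw [Finset.inter_comm]
      exact (Finset.mem_filter.mp hB).2
  have h2 : (G.filter (fun B => ¬ t ≤ (A0 ∩ B).card)).card ≤ (c - t + 1) * n^(c-t) := by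
    apply card_ball _ A0 (c-t) _ hn1
    intro B hB
    rw [Finset.mem_filter] at hB
    rw [symmDiff_comm]
    exact hcr B hB.1 (by omega)
  have hc1 : 2^(A0.card) ≤ 2^b := pow2_mono hA0c
  have hc2 : c - t + 1 ≤ b + 1 := by omega
  have key : G.card ≤ (2^b + 1) * ((b+1) * n^(c-t)) := by
    have e1 : 2^(A0.card) * ((c-t+1) * n^(c-t)) ≤ 2^b * ((b+1) * n^(c-t)) :=
      Nat.mul_le_mul hc1 (Nat.mul_le_mul_right _ hc2)
    have e2 : (c-t+1) * n^(c-t) ≤ (b+1) * n^(c-t) := Nat.mul_le_mul_right _ hc2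
    calc G.card = _ + _ := hsplit.symm
      _ ≤ 2^b * ((b+1) * n^(c-t)) + (b+1) * n^(c-t) := by
          have := h1.trans e1; have := h2.trans e2; omega
      _ = (2^b + 1) * ((b+1) * n^(c-t)) := by ring
  calc G.card ≤ (2^b + 1) * ((b+1) * n^(c-t)) := key
    _ = ((b+1) * (2^b+1)) * n^(c-t) := by ring
    _ ≤ 2^(5*(b+2)) * n^(c-t) := Nat.mul_le_mul_right _ (const_c1 b)


open Finset



lemma insert_inter_insert' {α : Type*} [DecidableEq α] (x : α) (s t : Finset α) :
    insert x s ∩ insert x t = insert x (s ∩ t) := by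
  ext y; simp only [Finset.mem_inter, Finset.mem_insert]; tauto

/-- The sunflower lemma: a family of `s`-sets of size more than `s! * q^s`
contains a sunflower with `q+1` petals. -/
theorem sunflower_exists {α : Type*} [DecidableEq α] :
    ∀ (s q : ℕ) (A : Finset (Finset α)),
    (∀ a ∈ A, a.card = s) → Nat.factorial s * q ^ s < A.card →
    ∃ Y P, P ⊆ A ∧ P.card = q + 1 ∧ (∀ a ∈ P, ∀ a' ∈ P, a ≠ a' → a ∩ a' = Y) := by
  intro s
  induction s with
  | zero =>
    intro q A hcard hbig
    simp only [Nat.factorial_zero, pow_zero, mul_one] at hbig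
    obtain ⟨a, ha, b, hb, hab⟩ := Finset.one_lt_card.mp hbig
    exact absurd (by rw [Finset.card_eq_zero.mp (hcard a ha), Finset.card_eq_zero.mp (hcard b hb)])
      hab
  | succ s IH =>
    intro q A hcard hbig
    classical
    set D := A.powerset.filter (fun M => ∀ a ∈ M, ∀ a' ∈ M, a ≠ a' → a ∩ a' = ∅) with hD
    have hDne : D.Nonempty := ⟨∅, by simp [hD]⟩
    obtain ⟨M, hMD, hMmax⟩ := D.exists_max_image Finset.card hDne
    rw [hD, Finset.mem_filter, Finset.mem_powerset] at hMD
    obtain ⟨hMsub, hMdisj⟩ := hMD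
    by_cases hq : q + 1 ≤ M.card
    · obtain ⟨P, hPM, hPcard⟩ := Finset.exists_subset_card_eq hq
      exact ⟨∅, P, hPM.trans hMsub, hPcard,
        fun a ha a' ha' hne => hMdisj a (hPM ha) a' (hPM ha') hne⟩
    · -- M.card ≤ q; every member of A meets U
      push_neg at hq
      have hMq : M.card ≤ q := by omega
      set U := M.biUnion id with hU
      have hUcard : U.card ≤ q * (s + 1) := by
        calc U.card ≤ ∑ a ∈ M, (id a).card := Finset.card_biUnion_le
          _ = ∑ a ∈ M, (s+1) := by
              apply Finset.sum_congr rfl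
              intro a ha; simp [hcard a (hMsub ha)]
          _ = M.card * (s+1) := by rw [Finset.sum_const, smul_eq_mul]
          _ ≤ q * (s+1) := Nat.mul_le_mul_right _ hMq
      have hhit : ∀ a ∈ A, ∃ x, x ∈ a ∧ x ∈ U := by
        intro a ha
        by_cases haM : a ∈ M
        · have : a.Nonempty := Finset.card_pos.mp (by rw [hcard a ha]; omega)
          obtain ⟨x, hx⟩ := this
          exact ⟨x, hx, Finset.mem_biUnion.mpr ⟨a, haM, hx⟩⟩
        · -- insert a M is not pairwise disjoint by maximality
          have hins : ¬ (∀ u ∈ insert a M, ∀ v ∈ insert a M, u ≠ v → u ∩ v = ∅) := by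
            intro hcontra
            have hmem : insert a M ∈ D := by
              rw [hD, Finset.mem_filter, Finset.mem_powerset]
              exact ⟨Finset.insert_subset ha hMsub, hcontra⟩
            have := hMmax _ hmem
            rw [Finset.card_insert_of_notMem haM] at this
            omega
          push_neg at hins
          obtain ⟨u, hu, v, hv, huv, hne⟩ := hins
          rw [Finset.mem_insert] at hu hv
          have key : ∃ w ∈ M, (a ∩ w).Nonempty := by
            rcases hu with hu | hu <;> rcases hv with hv | hv
            · exact absurd (hu.trans hv.symm) huv
            · exact ⟨v, hv, by rw [← hu]; exact hne⟩
            · refine ⟨u, hu, ?_⟩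
              rw [Finset.inter_comm, ← hv]
              exact hne
            · exact absurd (hMdisj u hu v hv huv) hne.ne_empty
          obtain ⟨w, hw, x, hx⟩ := key
          rw [Finset.mem_inter] at hx
          exact ⟨x, hx.1, Finset.mem_biUnion.mpr ⟨w, hw, hx.2⟩⟩
      -- pigeonhole: some x is in many members
      have hx : ∃ x ∈ U, Nat.factorial s * q ^ s < (A.filter (fun a => x ∈ a)).card := by
        by_contra hcon
        push_neg at hcon
        have hcover : A ⊆ U.biUnion (fun x => A.filter (fun a => x ∈ a)) := by
          intro a ha
          obtain ⟨x, hx1, hx2⟩ := hhit a ha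
          exact Finset.mem_biUnion.mpr ⟨x, hx2, Finset.mem_filter.mpr ⟨ha, hx1⟩⟩
        have : A.card ≤ q * (s+1) * (Nat.factorial s * q ^ s) := by
          calc A.card ≤ (U.biUnion (fun x => A.filter (fun a => x ∈ a))).card :=
                Finset.card_le_card hcover
            _ ≤ ∑ x ∈ U, (A.filter (fun a => x ∈ a)).card := Finset.card_biUnion_le
            _ ≤ ∑ _x ∈ U, Nat.factorial s * q ^ s := Finset.sum_le_sum (fun x hxU => hcon x hxU)
            _ = U.card * (Nat.factorial s * q ^ s) := by rw [Finset.sum_const, smul_eq_mul]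
            _ ≤ q * (s+1) * (Nat.factorial s * q ^ s) := Nat.mul_le_mul_right _ hUcard
        have heq : q * (s+1) * (Nat.factorial s * q ^ s)
            = Nat.factorial (s+1) * q ^ (s+1) := by
          rw [Nat.factorial_succ, pow_succ]; ring
        rw [heq] at this
        omega
      obtain ⟨x, _hxU, hxbig⟩ := hx
      set Ax := A.filter (fun a => x ∈ a) with hAx
      set A' := Ax.image (fun a => a.erase x) with hA'
      have hxmem : ∀ a ∈ Ax, x ∈ a := by
        intro a ha; rw [hAx, Finset.mem_filter] at ha; exact ha.2
      have hcard' : A'.card = Ax.card := by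
        rw [hA']
        apply Finset.card_image_of_injOn
        intro u hu v hv huv
        dsimp only at huv
        rw [← Finset.insert_erase (hxmem u (by simpa using hu)), ← Finset.insert_erase (hxmem v (by simpa using hv)), huv]
      have hmem' : ∀ c ∈ A', c.card = s := by
        intro c hc
        rw [hA', Finset.mem_image] at hc
        obtain ⟨u, hu, huc⟩ := hc
        rw [hAx, Finset.mem_filter] at hu
        rw [← huc, Finset.card_erase_of_mem hu.2, hcard u hu.1]
        omega
      obtain ⟨Y', P', hP'sub, hP'card, hP'pair⟩ := IH q A' hmem' (by rw [hcard']; exact hxbig)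
      have hnotin : ∀ c ∈ P', x ∉ c := by
        intro c hc
        have := hP'sub hc
        rw [hA', Finset.mem_image] at this
        obtain ⟨u, _, huc⟩ := this
        rw [← huc]
        exact Finset.notMem_erase x u
      refine ⟨insert x Y', P'.image (fun c => insert x c), ?_, ?_, ?_⟩
      · intro a ha
        rw [Finset.mem_image] at ha
        obtain ⟨c, hc, hca⟩ := ha
        have := hP'sub hc
        rw [hA', Finset.mem_image] at this
        obtain ⟨u, hu, huc⟩ := this
        have : insert x c = u := by rw [← huc, Finset.insert_erase (hxmem u hu)]
        rw [← hca, this]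
        rw [hAx, Finset.mem_filter] at hu
        exact hu.1
      · rw [Finset.card_image_of_injOn, hP'card]
        intro u hu v hv huv
        dsimp only at huv
        rw [← Finset.erase_insert (hnotin u (by simpa using hu)), ← Finset.erase_insert (hnotin v (by simpa using hv)), huv]
      · intro a ha a' ha' hne
        rw [Finset.mem_image] at ha ha'
        obtain ⟨c, hc, hca⟩ := ha
        obtain ⟨c', hc', hca'⟩ := ha'
        have hcc' : c ≠ c' := by
          intro h; apply hne; rw [← hca, ← hca', h]
        rw [← hca, ← hca', insert_inter_insert', hP'pair c hc c' hc' hcc']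




open Finset



lemma choose_lower (ν m : ℕ) : (ν + 1 - m)^m ≤ Nat.factorial m * ν.choose m := by
  rw [← Nat.descFactorial_eq_factorial_mul_choose]
  exact Nat.pow_sub_le_descFactorial ν m

lemma choose_le_S (ν m : ℕ) : ν.choose m ≤ ∑ s ∈ Finset.range (m+1), ν.choose s :=
  Finset.single_le_sum (fun i _ => Nat.zero_le _) (Finset.self_mem_range_succ m)

lemma one_le_S (ν m : ℕ) : 1 ≤ ∑ s ∈ Finset.range (m+1), ν.choose s := by
  have h0 : ν.choose 0 = 1 := Nat.choose_zero_right ν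
  calc 1 = ν.choose 0 := h0.symm
    _ ≤ _ := Finset.single_le_sum (fun i _ => Nat.zero_le _) (Finset.mem_range.mpr (by omega))

/-- The main arithmetic comparison: a crude bound of the form `C * n^(m₁+m₂-1)` is
dominated by the product of binomial coefficients once `n` is large. -/
lemma arith_main {n t m₁ m₂ B C : ℕ} (htB : t ≤ B) (h₁ : m₁ ≤ B) (h₂ : m₂ ≤ B)
    (hM : 1 ≤ m₁ + m₂) (hbase : 4*B + 2 ≤ n)
    (hC : C * Nat.factorial B * Nat.factorial B * 2^(m₁+m₂) ≤ n) :
    C * n ^ (m₁ + m₂ - 1) ≤ (n - t).choose m₁ * (n - t).choose m₂ := by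
  set M := m₁ + m₂ with hMdef
  set d := n - t - B with hd
  have hdle : ∀ m : ℕ, m ≤ B → d ^ m ≤ Nat.factorial m * (n-t).choose m := by
    intro m hm
    refine le_trans (Nat.pow_le_pow_left (show d ≤ n - t + 1 - m by omega) m) (choose_lower _ m)
  have h2d : n ≤ 2 * d := by omega
  set K := Nat.factorial m₁ * Nat.factorial m₂ * 2^M with hK
  have hKpos : 0 < K := by positivity
  have hCn : C * K ≤ n := by
    calc C * K ≤ C * (Nat.factorial B * Nat.factorial B * 2^M) := by
          apply Nat.mul_le_mul_left
          exact Nat.mul_le_mul_right _ (Nat.mul_le_mul (Nat.factorial_le h₁) (Nat.factorial_le h₂))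
      _ = C * Nat.factorial B * Nat.factorial B * 2^M := by ring
      _ ≤ n := hC
  have key : (C * n ^ (M - 1)) * K ≤ ((n - t).choose m₁ * (n - t).choose m₂) * K := by
    calc (C * n ^ (M - 1)) * K = (C * K) * n ^ (M-1) := by ring
      _ ≤ n * n ^ (M-1) := Nat.mul_le_mul_right _ hCn
      _ = n ^ M := by rw [← pow_succ']; congr 1; omega
      _ ≤ (2*d) ^ M := Nat.pow_le_pow_left h2d M
      _ = 2^M * (d ^ m₁ * d ^ m₂) := by rw [mul_pow, hMdef, pow_add]; ring
      _ ≤ 2^M * ((Nat.factorial m₁ * (n-t).choose m₁) * (Nat.factorial m₂ * (n-t).choose m₂)) := by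
          exact Nat.mul_le_mul_left _ (Nat.mul_le_mul (hdle m₁ h₁) (hdle m₂ h₂))
      _ = ((n - t).choose m₁ * (n - t).choose m₂) * K := by rw [hK]; ring
  exact Nat.le_of_mul_le_mul_right key hKpos



lemma mem_of_symmDiff_eq {α : Type*} [DecidableEq α] {X B D : Finset α} (hD : D = X ∆ B) (y : α) :
    y ∈ B ↔ ((y ∈ X ∧ y ∉ D) ∨ (y ∈ D ∧ y ∉ X)) := by
  subst hD
  by_cases h1 : y ∈ X <;> by_cases h2 : y ∈ B <;> simp [Finset.mem_symmDiff, h1, h2]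

/-- tt-piece: sets t-intersecting both B1 and B2 contain t+1 elements of U0. -/
lemma piece_tt_key {n : ℕ} {t : ℕ} {X0 D1 D2 B1 B2 : Finset (Fin n)}
    (hmem1 : ∀ y, y ∈ B1 ↔ ((y ∈ X0 ∧ y ∉ D1) ∨ (y ∈ D1 ∧ y ∉ X0)))
    (hmem2 : ∀ y, y ∈ B2 ↔ ((y ∈ X0 ∧ y ∉ D2) ∨ (y ∈ D2 ∧ y ∉ X0)))
    (hdisjmem : ∀ y, ¬ (y ∈ D2 ∧ y ∈ D1))
    (hsm : X0.card < t)
    (p : Finset (Fin n)) (h1 : t ≤ (p ∩ B1).card) (h2 : t ≤ (p ∩ B2).card) :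
    t + 1 ≤ (p ∩ (X0 ∪ D1 ∪ D2)).card := by
  have hsub1 : p ∩ B1 ⊆ (p ∩ X0) ∪ (p ∩ (D1 \ X0)) := by
    intro y hy
    rw [Finset.mem_inter] at hy
    have := (hmem1 y).mp hy.2
    simp only [Finset.mem_union, Finset.mem_inter, Finset.mem_sdiff]
    tauto
  have hsub2 : p ∩ B2 ⊆ (p ∩ X0) ∪ (p ∩ (D2 \ X0)) := by
    intro y hy
    rw [Finset.mem_inter] at hy
    have := (hmem2 y).mp hy.2
    simp only [Finset.mem_union, Finset.mem_inter, Finset.mem_sdiff]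
    tauto
  have e1 : t ≤ (p ∩ X0).card + (p ∩ (D1 \ X0)).card := by
    calc t ≤ (p ∩ B1).card := h1
      _ ≤ ((p ∩ X0) ∪ (p ∩ (D1 \ X0))).card := Finset.card_le_card hsub1
      _ ≤ _ := Finset.card_union_le _ _
  have e2 : t ≤ (p ∩ X0).card + (p ∩ (D2 \ X0)).card := by
    calc t ≤ (p ∩ B2).card := h2
      _ ≤ ((p ∩ X0) ∪ (p ∩ (D2 \ X0))).card := Finset.card_le_card hsub2
      _ ≤ _ := Finset.card_union_le _ _
  have ea : (p ∩ X0).card ≤ X0.card := Finset.card_le_card Finset.inter_subset_right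
  have hd12 : Disjoint (p ∩ (D1 \ X0)) (p ∩ (D2 \ X0)) := by
    rw [Finset.disjoint_left]
    intro y hy1 hy2
    rw [Finset.mem_inter, Finset.mem_sdiff] at hy1 hy2
    exact hdisjmem y ⟨hy2.2.1, hy1.2.1⟩
  have hd01 : Disjoint (p ∩ X0) ((p ∩ (D1 \ X0)) ∪ (p ∩ (D2 \ X0))) := by
    rw [Finset.disjoint_left]
    intro y hy1 hy2
    rw [Finset.mem_inter] at hy1
    rw [Finset.mem_union, Finset.mem_inter, Finset.mem_inter, Finset.mem_sdiff,
      Finset.mem_sdiff] at hy2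
    tauto
  have hsubU : (p ∩ X0) ∪ ((p ∩ (D1 \ X0)) ∪ (p ∩ (D2 \ X0))) ⊆ p ∩ (X0 ∪ D1 ∪ D2) := by
    intro y hy
    simp only [Finset.mem_union, Finset.mem_inter, Finset.mem_sdiff] at hy
    rw [Finset.mem_inter]
    simp only [Finset.mem_union]
    tauto
  have ecard : (p ∩ X0).card + ((p ∩ (D1 \ X0)).card + (p ∩ (D2 \ X0)).card)
      ≤ (p ∩ (X0 ∪ D1 ∪ D2)).card := by
    rw [← Finset.card_union_of_disjoint hd12, ← Finset.card_union_of_disjoint hd01]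
    exact Finset.card_le_card hsubU
  omega

/-- mixed piece: t-intersecting B1 but close to B2 forces the difference to hit B1 \ B2. -/
lemma piece_mixed_key {n : ℕ} {t δ : ℕ} {B1 B2 p : Finset (Fin n)}
    (hintercard : (B1 ∩ B2).card < t)
    (h1 : t ≤ (p ∩ B1).card) (hclose : (p ∆ B2).card ≤ δ) :
    (B2 ∆ p).card ≤ (δ - 1) + 1 ∧ ((B2 ∆ p) ∩ (B1 \ B2)).Nonempty := by
  constructor
  · rw [symmDiff_comm]
    have h := hclose
    omega
  · have hns : ¬ (p ∩ B1 ⊆ B2) := by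
      intro hcon
      have hsub : p ∩ B1 ⊆ B1 ∩ B2 := by
        intro y hy
        rw [Finset.mem_inter] at hy ⊢
        exact ⟨hy.2, hcon (Finset.mem_inter.mpr hy)⟩
      have := Finset.card_le_card hsub
      omega
    obtain ⟨y, hy1, hy2⟩ := Finset.not_subset.mp hns
    rw [Finset.mem_inter] at hy1
    refine ⟨y, ?_⟩
    rw [Finset.mem_inter, Finset.mem_symmDiff, Finset.mem_sdiff]
    exact ⟨Or.inr ⟨hy1.1, hy2⟩, hy1.2, hy2⟩

/-- cc-piece: close to both B1 and B2 forces the difference to hit B1 ∆ B2. -/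
lemma piece_cc_key {n : ℕ} {δ : ℕ} {B1 B2 p : Finset (Fin n)} (hδ1 : 1 ≤ δ)
    (hScard : (B1 ∆ B2).card = 2*δ)
    (hclose1 : (p ∆ B1).card ≤ δ) (hclose2 : (p ∆ B2).card ≤ δ) :
    (B1 ∆ p).card ≤ (δ - 1) + 1 ∧ ((B1 ∆ p) ∩ (B1 ∆ B2)).Nonempty := by
  constructor
  · rw [symmDiff_comm]; omega
  · have hsub : (B1 ∆ B2) \ (B1 ∆ p) ⊆ p ∆ B2 := by
      intro y hy
      rw [Finset.mem_sdiff, Finset.mem_symmDiff, Finset.mem_symmDiff] at hy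
      rw [Finset.mem_symmDiff]
      tauto
    have e1 : ((B1 ∆ B2) \ (B1 ∆ p)).card ≤ δ :=
      le_trans (Finset.card_le_card hsub) hclose2
    have e2 := Finset.card_inter_add_card_sdiff (B1 ∆ B2) (B1 ∆ p)
    obtain ⟨y, hy⟩ := Finset.card_pos.mp (show 0 < ((B1 ∆ B2) ∩ (B1 ∆ p)).card by omega)
    rw [Finset.mem_inter] at hy
    exact ⟨y, Finset.mem_inter.mpr ⟨hy.2, hy.1⟩⟩

lemma symmDiff_union_of_disjoint {α : Type*} [DecidableEq α] {X B1 B2 D1 D2 : Finset α}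
    (hD1 : D1 = X ∆ B1) (hD2 : D2 = X ∆ B2) (hdisj : ∀ y, ¬ (y ∈ D2 ∧ y ∈ D1)) :
    B1 ∆ B2 = D1 ∪ D2 := by
  have h1 := mem_of_symmDiff_eq hD1
  have h2 := mem_of_symmDiff_eq hD2
  ext y
  rw [Finset.mem_symmDiff, Finset.mem_union]
  have e1 := h1 y
  have e2 := h2 y
  have e3 := hdisj y
  by_cases hX : y ∈ X <;> tauto

/-- From a large family inside the δ-ball around X0, extract two elements of the
δ-sphere whose differences from X0 are disjoint. -/
lemma find_pair {n : ℕ} (b t δ : ℕ) (hn1 : 1 ≤ n) (hδ1 : 1 ≤ δ) (hδb : δ ≤ b)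
    (Q : Finset (Finset (Fin n))) (X0 : Finset (Fin n))
    (hball : ∀ q ∈ Q, (X0 ∆ q).card ≤ δ)
    (hQbig : Wc b * n ^ (δ - 1) < Q.card) :
    ∃ B1 ∈ Q, ∃ B2 ∈ Q, (X0 ∆ B1).card = δ ∧ (X0 ∆ B2).card = δ ∧
      (X0 ∆ B2) ∩ (X0 ∆ B1) = ∅ := by
  classical
  set x := n ^ (δ - 1) with hx
  have hx1 : 1 ≤ x := Nat.one_le_pow _ _ (by omega)
  set Q' := Q.filter (fun q => (X0 ∆ q).card = δ) with hQ'
  have hQ'big : b^2 * x + 1 ≤ Q'.card := by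
    have hrest : (Q.filter (fun q => ¬ (X0 ∆ q).card = δ)).card ≤ δ * x := by
      have hb : (Q.filter (fun q => ¬ (X0 ∆ q).card = δ)).card ≤ (δ - 1 + 1) * n^(δ-1) := by
        apply card_ball _ X0 (δ-1) _ hn1
        intro q hq
        rw [Finset.mem_filter] at hq
        rw [symmDiff_comm]
        have := hball q hq.1
        have h2 := hq.2
        omega
      calc (Q.filter (fun q => ¬ (X0 ∆ q).card = δ)).card ≤ (δ-1+1) * n^(δ-1) := hb
        _ = δ * x := by rw [hx]; congr 1; omega
    have hsplit := Finset.card_filter_add_card_filter_not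
      (s := Q) (p := fun q => (X0 ∆ q).card = δ)
    have e1 : (Q.filter (fun q => ¬ (X0 ∆ q).card = δ)).card ≤ b * x :=
      hrest.trans (Nat.mul_le_mul_right _ hδb)
    have e2 : b^2 * x + b * x + x ≤ Wc b * x := by
      have h := Nat.mul_le_mul_right x (const_c4 b)
      calc b^2*x + b*x + x = (b^2+b+1)*x := by ring
        _ ≤ Wc b * x := h
    have e3 : Wc b * x < Q.card := hQbig
    have e4 : Q'.card = (Q.filter (fun q => (X0 ∆ q).card = δ)).card := rfl
    omega
  obtain ⟨B1, hB1mem⟩ : Q'.Nonempty := Finset.card_pos.mp (by omega)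
  have hB1Q : B1 ∈ Q := (Finset.mem_filter.mp hB1mem).1
  have hD1card : (X0 ∆ B1).card = δ := (Finset.mem_filter.mp hB1mem).2
  set Q'' := Q'.filter (fun q => ((X0 ∆ q) ∩ (X0 ∆ B1)).Nonempty) with hQ''
  have hQ''card : Q''.card ≤ b^2 * x := by
    have hb : Q''.card ≤ (X0 ∆ B1).card * ((δ - 1 + 1) * n^(δ-1)) := by
      apply card_ball_hit _ X0 (X0 ∆ B1) (δ-1) _ hn1
      intro q hq
      rw [hQ'', Finset.mem_filter] at hq
      constructor
      · have := hball q ((Finset.mem_filter.mp hq.1).1)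
        omega
      · exact hq.2
    calc Q''.card ≤ (X0 ∆ B1).card * ((δ-1+1) * n^(δ-1)) := hb
      _ = δ * (δ * x) := by rw [hD1card, hx]; congr 2; omega
      _ ≤ b * (b * x) := Nat.mul_le_mul hδb (Nat.mul_le_mul_right _ hδb)
      _ = b^2 * x := by ring
  have hB2ex : (Q' \ Q'').Nonempty := by
    apply Finset.card_pos.mp
    have := Finset.card_le_card_sdiff_add_card (s := Q') (t := Q'')
    omega
  obtain ⟨B2, hB2mem⟩ := hB2ex
  rw [Finset.mem_sdiff] at hB2mem
  have hB2Q' : B2 ∈ Q' := hB2mem.1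
  refine ⟨B1, hB1Q, B2, (Finset.mem_filter.mp hB2Q').1, hD1card,
    (Finset.mem_filter.mp hB2Q').2, ?_⟩
  have h := hB2mem.2
  rw [hQ'', Finset.mem_filter] at h
  push_neg at h
  exact h hB2Q'

lemma small_core {n : ℕ} (b t δ cP : ℕ) (hn1 : 1 ≤ n) (hδ1 : 1 ≤ δ) (ht1 : 1 ≤ t)
    (hδb : δ ≤ b) (hPb : cP ≤ b) (htP : t ≤ cP) (hδP : δ ≤ cP - t) (htb : t ≤ b)
    (P Q : Finset (Finset (Fin n))) (X0 : Finset (Fin n))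
    (hX0P : X0 ∈ P) (hsm : X0.card < t)
    (hP : ∀ p ∈ P, p.card ≤ cP)
    (hcr : ∀ p ∈ P, ∀ q ∈ Q, (p ∩ q).card < t → (p ∆ q).card ≤ δ)
    (hQbig : Wc b * n ^ (δ - 1) < Q.card) :
    P.card ≤ 2 ^ (5*(b+2) + 2) * n ^ (cP - t - 1) := by
  have hball : ∀ q ∈ Q, (X0 ∆ q).card ≤ δ := by
    intro q hq
    exact hcr X0 hX0P q hq
      (lt_of_le_of_lt (Finset.card_le_card Finset.inter_subset_left) hsm)
  obtain ⟨B1, hB1Q, B2, hB2Q, hD1card, hD2card, hdisj⟩ :=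
    find_pair b t δ hn1 hδ1 hδb Q X0 hball hQbig
  have hdisjmem : ∀ y : Fin n, ¬ (y ∈ (X0 ∆ B2) ∧ y ∈ (X0 ∆ B1)) := by
    intro y hy
    have : y ∈ (X0 ∆ B2) ∩ (X0 ∆ B1) := Finset.mem_inter.mpr hy
    rw [hdisj] at this
    exact absurd this (Finset.notMem_empty y)
  have hmem1 := mem_of_symmDiff_eq (X := X0) (B := B1) (D := X0 ∆ B1) rfl
  have hmem2 := mem_of_symmDiff_eq (X := X0) (B := B2) (D := X0 ∆ B2) rfl
  have hinter : B1 ∩ B2 ⊆ X0 := by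
    intro y hy
    rw [Finset.mem_inter] at hy
    have h1 := (hmem1 y).mp hy.1
    have h2 := (hmem2 y).mp hy.2
    by_contra hyX
    exact hdisjmem y ⟨by tauto, by tauto⟩
  have hintercard : (B1 ∩ B2).card < t :=
    lt_of_le_of_lt (Finset.card_le_card hinter) hsm
  have hS : B1 ∆ B2 = (X0 ∆ B1) ∪ (X0 ∆ B2) :=
    symmDiff_union_of_disjoint rfl rfl hdisjmem
  have hScard : (B1 ∆ B2).card = 2*δ := by
    rw [hS, Finset.card_union_of_disjoint, hD1card, hD2card]
    · omega
    · rw [Finset.disjoint_left]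
      intro a ha ha2
      exact hdisjmem a ⟨ha2, ha⟩
  have hB1c : B1.card ≤ 2*b := by
    have hsub : B1 ⊆ X0 ∪ (X0 ∆ B1) := by
      intro y hy
      rw [Finset.mem_union]
      have := (hmem1 y).mp hy
      tauto
    calc B1.card ≤ (X0 ∪ (X0 ∆ B1)).card := Finset.card_le_card hsub
      _ ≤ X0.card + (X0 ∆ B1).card := Finset.card_union_le _ _
      _ ≤ 2*b := by rw [hD1card]; omega
  have hB2c : B2.card ≤ 2*b := by
    have hsub : B2 ⊆ X0 ∪ (X0 ∆ B2) := by
      intro y hy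
      rw [Finset.mem_union]
      have := (hmem2 y).mp hy
      tauto
    calc B2.card ≤ (X0 ∪ (X0 ∆ B2)).card := Finset.card_le_card hsub
      _ ≤ X0.card + (X0 ∆ B2).card := Finset.card_union_le _ _
      _ ≤ 2*b := by rw [hD2card]; omega
  have hU0card : (X0 ∪ (X0 ∆ B1) ∪ (X0 ∆ B2)).card ≤ 3*b := by
    calc (X0 ∪ (X0 ∆ B1) ∪ (X0 ∆ B2)).card
        ≤ (X0 ∪ (X0 ∆ B1)).card + (X0 ∆ B2).card := Finset.card_union_le _ _
      _ ≤ X0.card + (X0 ∆ B1).card + (X0 ∆ B2).card := by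
          have := Finset.card_union_le X0 (X0 ∆ B1); omega
      _ ≤ 3*b := by rw [hD1card, hD2card]; omega
  -- the four pieces
  have count_tt : (P.filter (fun p => t ≤ (p ∩ B1).card ∧ t ≤ (p ∩ B2).card)).card
      ≤ 2^(3*b) * ((cP - t) * n^(cP - t - 1)) := by
    have hbnd := card_tint (P.filter (fun p => t ≤ (p ∩ B1).card ∧ t ≤ (p ∩ B2).card))
      (X0 ∪ (X0 ∆ B1) ∪ (X0 ∆ B2)) (t+1) cP
      (fun p hp => hP p (Finset.mem_filter.mp hp).1)
      (fun p hp => piece_tt_key hmem1 hmem2 hdisjmem hsm p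
        (Finset.mem_filter.mp hp).2.1 (Finset.mem_filter.mp hp).2.2) hn1
    calc (P.filter (fun p => t ≤ (p ∩ B1).card ∧ t ≤ (p ∩ B2).card)).card
        ≤ 2^((X0 ∪ (X0 ∆ B1) ∪ (X0 ∆ B2)).card) * ((cP - (t+1) + 1) * n^(cP - (t+1))) := hbnd
      _ ≤ 2^(3*b) * ((cP - t) * n^(cP - t - 1)) := by
          have h1 : (2:ℕ)^((X0 ∪ (X0 ∆ B1) ∪ (X0 ∆ B2)).card) ≤ 2^(3*b) := pow2_mono hU0card
          have h2 : cP - (t+1) + 1 ≤ cP - t := by omega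
          have h3 : cP - (t+1) = cP - t - 1 := by omega
          rw [h3]
          exact Nat.mul_le_mul h1 (Nat.mul_le_mul_right _ h2)
  have count_tc : (P.filter (fun p => t ≤ (p ∩ B1).card ∧ ¬ t ≤ (p ∩ B2).card)).card
      ≤ 2*b * (b * n^(cP - t - 1)) := by
    have hbnd := card_ball_hit (P.filter (fun p => t ≤ (p ∩ B1).card ∧ ¬ t ≤ (p ∩ B2).card))
      B2 (B1 \ B2) (δ - 1) (fun p hp => by
        have h := Finset.mem_filter.mp hp
        exact piece_mixed_key hintercard h.2.1
          (hcr p h.1 B2 hB2Q (by omega))) hn1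
    calc (P.filter (fun p => t ≤ (p ∩ B1).card ∧ ¬ t ≤ (p ∩ B2).card)).card
        ≤ (B1 \ B2).card * ((δ - 1 + 1) * n^(δ-1)) := hbnd
      _ ≤ 2*b * (b * n^(cP - t - 1)) := by
          have e1 : (B1 \ B2).card ≤ 2*b :=
            le_trans (Finset.card_le_card Finset.sdiff_subset) hB1c
          have e2 : δ - 1 + 1 ≤ b := by omega
          have e3 : n^(δ-1) ≤ n^(cP - t - 1) := Nat.pow_le_pow_right hn1 (by omega)
          exact Nat.mul_le_mul e1 (Nat.mul_le_mul e2 e3)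
  have count_ct : (P.filter (fun p => ¬ t ≤ (p ∩ B1).card ∧ t ≤ (p ∩ B2).card)).card
      ≤ 2*b * (b * n^(cP - t - 1)) := by
    have hbnd := card_ball_hit (P.filter (fun p => ¬ t ≤ (p ∩ B1).card ∧ t ≤ (p ∩ B2).card))
      B1 (B2 \ B1) (δ - 1) (fun p hp => by
        have h := Finset.mem_filter.mp hp
        exact piece_mixed_key (by rwa [Finset.inter_comm]) h.2.2
          (hcr p h.1 B1 hB1Q (by omega))) hn1
    calc (P.filter (fun p => ¬ t ≤ (p ∩ B1).card ∧ t ≤ (p ∩ B2).card)).card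
        ≤ (B2 \ B1).card * ((δ - 1 + 1) * n^(δ-1)) := hbnd
      _ ≤ 2*b * (b * n^(cP - t - 1)) := by
          have e1 : (B2 \ B1).card ≤ 2*b :=
            le_trans (Finset.card_le_card Finset.sdiff_subset) hB2c
          have e2 : δ - 1 + 1 ≤ b := by omega
          have e3 : n^(δ-1) ≤ n^(cP - t - 1) := Nat.pow_le_pow_right hn1 (by omega)
          exact Nat.mul_le_mul e1 (Nat.mul_le_mul e2 e3)
  have count_cc : (P.filter (fun p => ¬ t ≤ (p ∩ B1).card ∧ ¬ t ≤ (p ∩ B2).card)).card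
      ≤ 2*b * (b * n^(cP - t - 1)) := by
    have hbnd := card_ball_hit (P.filter (fun p => ¬ t ≤ (p ∩ B1).card ∧ ¬ t ≤ (p ∩ B2).card))
      B1 (B1 ∆ B2) (δ - 1) (fun p hp => by
        have h := Finset.mem_filter.mp hp
        exact piece_cc_key hδ1 hScard
          (hcr p h.1 B1 hB1Q (by omega)) (hcr p h.1 B2 hB2Q (by omega))) hn1
    calc (P.filter (fun p => ¬ t ≤ (p ∩ B1).card ∧ ¬ t ≤ (p ∩ B2).card)).card
        ≤ (B1 ∆ B2).card * ((δ - 1 + 1) * n^(δ-1)) := hbnd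
      _ ≤ 2*b * (b * n^(cP - t - 1)) := by
          have e1 : (B1 ∆ B2).card ≤ 2*b := by rw [hScard]; omega
          have e2 : δ - 1 + 1 ≤ b := by omega
          have e3 : n^(δ-1) ≤ n^(cP - t - 1) := Nat.pow_le_pow_right hn1 (by omega)
          exact Nat.mul_le_mul e1 (Nat.mul_le_mul e2 e3)
  have hcover : P.card ≤
      (P.filter (fun p => t ≤ (p ∩ B1).card ∧ t ≤ (p ∩ B2).card)).card
      + (P.filter (fun p => t ≤ (p ∩ B1).card ∧ ¬ t ≤ (p ∩ B2).card)).card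
      + ((P.filter (fun p => ¬ t ≤ (p ∩ B1).card ∧ t ≤ (p ∩ B2).card)).card
      + (P.filter (fun p => ¬ t ≤ (p ∩ B1).card ∧ ¬ t ≤ (p ∩ B2).card)).card) := by
    have d1 := Finset.card_filter_add_card_filter_not
      (s := P) (p := fun p => t ≤ (p ∩ B1).card)
    have d2 := Finset.card_filter_add_card_filter_not
      (s := P.filter (fun p => t ≤ (p ∩ B1).card)) (p := fun p => t ≤ (p ∩ B2).card)
    have d3 := Finset.card_filter_add_card_filter_not
      (s := P.filter (fun p => ¬ t ≤ (p ∩ B1).card)) (p := fun p => t ≤ (p ∩ B2).card)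
    rw [Finset.filter_filter, Finset.filter_filter] at d2 d3
    omega
  have final : P.card ≤ (2^(3*b) * b + 6*b^2) * n^(cP - t - 1) := by
    have e0 : cP - t ≤ b := by omega
    have ett : 2^(3*b) * ((cP - t) * n^(cP-t-1)) ≤ 2^(3*b) * b * n^(cP-t-1) := by
      calc 2^(3*b) * ((cP - t) * n^(cP-t-1)) ≤ 2^(3*b) * (b * n^(cP-t-1)) :=
            Nat.mul_le_mul_left _ (Nat.mul_le_mul_right _ e0)
        _ = 2^(3*b) * b * n^(cP-t-1) := by ring
    have h1 := count_tt.trans ett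
    have eo : 2*b * (b * n^(cP-t-1)) = 2*b^2 * n^(cP-t-1) := by ring
    rw [eo] at count_tc count_ct count_cc
    calc P.card ≤ _ := hcover
      _ ≤ 2^(3*b) * b * n^(cP-t-1) + 2*b^2 * n^(cP-t-1) + (2*b^2 * n^(cP-t-1)
          + 2*b^2 * n^(cP-t-1)) := by omega
      _ = (2^(3*b) * b + 6*b^2) * n^(cP - t - 1) := by ring
  calc P.card ≤ (2^(3*b) * b + 6*b^2) * n^(cP - t - 1) := final
    _ ≤ 2^(5*(b+2)+2) * n^(cP - t - 1) := Nat.mul_le_mul_right _ (const_c5 b)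

lemma inter_union_sdiff' {α : Type*} [DecidableEq α] (s t : Finset α) :
    (s ∩ t) ∪ (s \ t) = s := by
  ext y; simp only [Finset.mem_union, Finset.mem_inter, Finset.mem_sdiff]; tauto

lemma choose_le_two_pow' {x t : ℕ} (h : t ≤ x) : x.choose t ≤ 2^x := by
  calc x.choose t ≤ ∑ m ∈ Finset.range (x+1), x.choose m :=
        Finset.single_le_sum (fun i _ => Nat.zero_le _) (Finset.mem_range.mpr (by omega))
    _ = 2^x := Nat.sum_range_choose x

lemma const_c6 (b : ℕ) : 2^b * (b^2 + 2*b) < Wc b := by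
  have h1 : b + 1 ≤ 2^b := succ_le_two_pow b
  have h2 : b^2 + 2*b ≤ (b+1)^2 := by nlinarith
  calc 2^b * (b^2+2*b) ≤ 2^b * (2^b)^2 := by
        refine Nat.mul_le_mul_left _ (h2.trans ?_)
        exact Nat.pow_le_pow_left h1 2
    _ = 2^(3*b) := by rw [← pow_mul, ← pow_add]; ring_nf
    _ < Wc b := by
        rw [Wc]
        apply Nat.pow_lt_pow_right (by norm_num)
        nlinarith

/-- From a large family, extract a large sunflower. -/
lemma sunflower_core {n b t k : ℕ} (hn1 : 1 ≤ n) (ht1 : 1 ≤ t) (htk : t ≤ k) (hkb : k ≤ b)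
    (F : Finset (Finset (Fin n)))
    (hFc : ∀ A ∈ F, A.card ≤ k) (hFt : ∀ A ∈ F, t ≤ A.card)
    (hFbig : Wc b * n ^ (k - t - 1) < F.card) :
    ∃ Y PP, PP ⊆ F ∧ PP.card = 3*b + 3 ∧ (∀ a ∈ PP, ∀ a' ∈ PP, a ≠ a' → a ∩ a' = Y)
      ∧ Y.card ≤ b ∧ (∀ a ∈ PP, Y ⊆ a ∧ (a \ Y).Nonempty) := by
  classical
  have hgood : ∃ s ∈ Finset.range (k+1), (3*b+2)^(2*b) < (F.filter (fun A => A.card = s)).card := by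
    by_contra hcon
    push_neg at hcon
    have hfib : F.card = ∑ s ∈ Finset.range (k+1), (F.filter (fun A => A.card = s)).card :=
      Finset.card_eq_sum_card_fiberwise
        (fun A hA => Finset.mem_range.mpr (Nat.lt_succ_of_le (hFc A hA)))
    have hle : F.card ≤ (k+1) * (3*b+2)^(2*b) := by
      calc F.card = _ := hfib
        _ ≤ ∑ _s ∈ Finset.range (k+1), (3*b+2)^(2*b) :=
            Finset.sum_le_sum (fun s hs => hcon s hs)
        _ = (k+1) * (3*b+2)^(2*b) := by rw [Finset.sum_const, Finset.card_range, smul_eq_mul]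
    have hW : (k+1) * (3*b+2)^(2*b) < Wc b := by
      calc (k+1) * (3*b+2)^(2*b) ≤ (b+1) * (3*b+2)^(2*b) :=
            Nat.mul_le_mul_right _ (by omega)
        _ < Wc b := const_c3 b
    have hWn : Wc b ≤ Wc b * n^(k-t-1) :=
      Nat.le_mul_of_pos_right _ (Nat.pow_pos (by omega))
    omega
  obtain ⟨s, _hs, hsbig⟩ := hgood
  have hthr : Nat.factorial s * (3*b+2)^s ≤ (3*b+2)^(2*b) := by
    have hsb : s ≤ b := by
      by_contra hcon
      push_neg at hcon
      obtain ⟨A, hA⟩ : (F.filter (fun A => A.card = s)).Nonempty := by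
        apply Finset.card_pos.mp
        have : (0:ℕ) < (3*b+2)^(2*b) := Nat.pow_pos (by omega)
        omega
      rw [Finset.mem_filter] at hA
      have := hFc A hA.1
      omega
    have e1 : Nat.factorial s ≤ (3*b+2)^b := by
      calc Nat.factorial s ≤ Nat.factorial b := Nat.factorial_le hsb
        _ ≤ b^b := Nat.factorial_le_pow b
        _ ≤ (3*b+2)^b := Nat.pow_le_pow_left (by omega) b
    have e2 : (3*b+2)^s ≤ (3*b+2)^b := Nat.pow_le_pow_right (by omega) hsb
    calc Nat.factorial s * (3*b+2)^s ≤ (3*b+2)^b * (3*b+2)^b := Nat.mul_le_mul e1 e2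
      _ = (3*b+2)^(2*b) := by rw [← pow_add]; ring_nf
  obtain ⟨Y, PP, hPPsub, hPPcard, hPPpair⟩ := sunflower_exists s (3*b+2)
    (F.filter (fun A => A.card = s))
    (fun a ha => (Finset.mem_filter.mp ha).2) (lt_of_le_of_lt hthr hsbig)
  have hPPF : PP ⊆ F := hPPsub.trans (Finset.filter_subset _ _)
  have htwo : ∀ a ∈ PP, ∃ a' ∈ PP, a' ≠ a := by
    intro a ha
    have h2 : 1 < PP.card := by omega
    obtain ⟨u, hu, v, hv, huv⟩ := Finset.one_lt_card.mp h2
    by_cases hau : u = a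
    · exact ⟨v, hv, by rw [← hau]; exact fun h => huv h.symm⟩
    · exact ⟨u, hu, hau⟩
  have hYsub : ∀ a ∈ PP, Y ⊆ a := by
    intro a ha
    obtain ⟨a', ha', hne⟩ := htwo a ha
    rw [← hPPpair a ha a' ha' (fun h => hne h.symm)]
    exact Finset.inter_subset_left
  have hYcard : Y.card ≤ b := by
    obtain ⟨a, ha⟩ : PP.Nonempty := Finset.card_pos.mp (by omega)
    calc Y.card ≤ a.card := Finset.card_le_card (hYsub a ha)
      _ ≤ k := hFc a (hPPF ha)
      _ ≤ b := hkb
  refine ⟨Y, PP, hPPF, hPPcard, hPPpair, hYcard, fun a ha => ⟨hYsub a ha, ?_⟩⟩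
  obtain ⟨a', ha', hne⟩ := htwo a ha
  rw [Finset.sdiff_nonempty]
  intro hcon
  have hsuba : a ⊆ a' := hcon.trans (hYsub a' ha')
  have hcards : a'.card ≤ a.card := by
    have e1 : a.card = s := (Finset.mem_filter.mp (hPPsub ha)).2
    have e2 : a'.card = s := (Finset.mem_filter.mp (hPPsub ha')).2
    omega
  exact hne (Finset.eq_of_subset_of_card_le hsuba hcards).symm

/-- Every member of the other family either t-intersects the core or has small part
outside the core. -/
lemma sunflower_dichotomy {n b t k l : ℕ} (hn1 : 1 ≤ n) (hlb : l ≤ b)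
    (Y : Finset (Fin n)) (PP F G : Finset (Finset (Fin n)))
    (hPPF : PP ⊆ F) (hPPcard : PP.card = 3*b+3)
    (hpair : ∀ a ∈ PP, ∀ a' ∈ PP, a ≠ a' → a ∩ a' = Y)
    (hpetal : ∀ a ∈ PP, Y ⊆ a ∧ (a \ Y).Nonempty)
    (hG : ∀ B ∈ G, B.card ≤ l)
    (hcr : ∀ A ∈ F, ∀ B ∈ G, (A ∩ B).card < t → (A ∆ B).card ≤ k - t) :
    ∀ B ∈ G, t ≤ (B ∩ Y).card ∨ (B \ Y).card ≤ k - t - 1 := by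
  classical
  intro B hB
  set Hit := PP.filter (fun a => ((a \ Y) ∩ B).Nonempty) with hHit
  have hHitcard : Hit.card ≤ B.card := by
    have hwit : ∀ a ∈ Hit, ∃ y, y ∈ (a \ Y) ∩ B := by
      intro a ha
      exact (Finset.mem_filter.mp ha).2
    set f : Finset (Fin n) → Fin n := fun a =>
      if h : ((a \ Y) ∩ B).Nonempty then h.choose else ⟨0, by omega⟩ with hf
    have hfspec : ∀ a ∈ Hit, f a ∈ (a \ Y) ∩ B := by
      intro a ha
      have h := (Finset.mem_filter.mp ha).2
      rw [hf]
      simp only [h, dif_pos]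
      exact h.choose_spec
    apply Finset.card_le_card_of_injOn f
    · intro a ha
      have := hfspec a ha
      rw [Finset.mem_inter] at this
      exact this.2
    · intro a ha a' ha' hEq
      by_contra hne
      have h1 := hfspec a ha
      have h2 := hfspec a' ha'
      rw [Finset.mem_inter, Finset.mem_sdiff] at h1 h2
      have hmem : f a ∈ a ∩ a' := by
        rw [Finset.mem_inter]
        exact ⟨h1.1.1, by rw [hEq]; exact h2.1.1⟩
      rw [hpair a (Finset.mem_of_mem_filter a ha) a' (Finset.mem_of_mem_filter a' ha') hne]
        at hmem
      exact h1.1.2 hmem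
  have hrem : (PP \ Hit).Nonempty := by
    apply Finset.card_pos.mp
    have h1 := Finset.card_le_card_sdiff_add_card (s := PP) (t := Hit)
    have h2 : B.card ≤ l := hG B hB
    omega
  obtain ⟨a, ha⟩ := hrem
  rw [Finset.mem_sdiff] at ha
  have haPP : a ∈ PP := ha.1
  have haHit : ((a \ Y) ∩ B) = ∅ := by
    have := ha.2
    rw [hHit, Finset.mem_filter] at this
    push_neg at this
    exact this haPP
  by_cases hBY : t ≤ (B ∩ Y).card
  · exact Or.inl hBY
  · right
    have hint : (a ∩ B).card < t := by
      have hsub : a ∩ B ⊆ B ∩ Y := by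
        intro y hy
        rw [Finset.mem_inter] at hy
        rw [Finset.mem_inter]
        refine ⟨hy.2, ?_⟩
        by_contra hyY
        have : y ∈ (a \ Y) ∩ B := by
          rw [Finset.mem_inter, Finset.mem_sdiff]
          exact ⟨⟨hy.1, hyY⟩, hy.2⟩
        rw [haHit] at this
        exact absurd this (Finset.notMem_empty y)
      have := Finset.card_le_card hsub
      omega
    have hclose : (a ∆ B).card ≤ k - t := hcr a (hPPF haPP) B hB hint
    have hsub : (B \ Y) ∪ (a \ Y) ⊆ a ∆ B := by
      intro y hy
      rw [Finset.mem_union, Finset.mem_sdiff, Finset.mem_sdiff] at hy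
      rw [Finset.mem_symmDiff]
      rcases hy with ⟨hyB, hyY⟩ | ⟨hya, hyY⟩
      · right
        refine ⟨hyB, ?_⟩
        intro hya
        have : y ∈ (a \ Y) ∩ B := by
          rw [Finset.mem_inter, Finset.mem_sdiff]
          exact ⟨⟨hya, hyY⟩, hyB⟩
        rw [haHit] at this
        exact absurd this (Finset.notMem_empty y)
      · left
        refine ⟨hya, ?_⟩
        intro hyB
        have : y ∈ (a \ Y) ∩ B := by
          rw [Finset.mem_inter, Finset.mem_sdiff]
          exact ⟨⟨hya, hyY⟩, hyB⟩
        rw [haHit] at this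
        exact absurd this (Finset.notMem_empty y)
    have hdisj : Disjoint (B \ Y) (a \ Y) := by
      rw [Finset.disjoint_left]
      intro y hy1 hy2
      rw [Finset.mem_sdiff] at hy1 hy2
      have : y ∈ (a \ Y) ∩ B := by
        rw [Finset.mem_inter, Finset.mem_sdiff]
        exact ⟨⟨hy2.1, hy2.2⟩, hy1.1⟩
      rw [haHit] at this
      exact absurd this (Finset.notMem_empty y)
    have hcards : (B \ Y).card + (a \ Y).card ≤ k - t := by
      calc (B \ Y).card + (a \ Y).card = ((B \ Y) ∪ (a \ Y)).card :=
            (Finset.card_union_of_disjoint hdisj).symm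
        _ ≤ (a ∆ B).card := Finset.card_le_card hsub
        _ ≤ k - t := hclose
    have hpet : 1 ≤ (a \ Y).card := Finset.card_pos.mpr (hpetal a haPP).2
    omega

set_option maxHeartbeats 3200000
/-- Main structural lemma: two large families satisfying the cross condition share a
common t-element kernel. -/
lemma extract {n b t k l : ℕ} (hn1 : 1 ≤ n) (ht1 : 1 ≤ t) (htk : t + 1 ≤ k)
    (hkl : k ≤ l) (hlb : l ≤ b)
    (F G : Finset (Finset (Fin n)))
    (hFc : ∀ A ∈ F, A.card ≤ k) (hGc : ∀ B ∈ G, B.card ≤ l)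
    (hcr : ∀ A ∈ F, ∀ B ∈ G, (A ∩ B).card < t → (A ∆ B).card ≤ k - t)
    (hFbig : Wc b * n ^ (k-t-1) < F.card) (hGbig : Wc b * n ^ (l-t-1) < G.card) :
    ∃ T : Finset (Fin n), T.card = t ∧ (∀ A ∈ F, T ⊆ A) ∧ (∀ B ∈ G, T ⊆ B) := by
  classical
  have htb : t ≤ b := by omega
  have hδ1 : 1 ≤ k - t := by omega
  have hδb : k - t ≤ b := by omega
  have hpowkl : n ^ (k-t-1) ≤ n ^ (l-t-1) := Nat.pow_le_pow_right hn1 (by omega)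
  have hcr' : ∀ B ∈ G, ∀ A ∈ F, (B ∩ A).card < t → (B ∆ A).card ≤ k - t := by
    intro B hB A hA h
    rw [symmDiff_comm]
    exact hcr A hA B hB (by rwa [Finset.inter_comm])
  -- no small sets in F
  have hFt : ∀ A ∈ F, t ≤ A.card := by
    by_contra hcon
    push_neg at hcon
    obtain ⟨A0, hA0F, hA0sm⟩ := hcon
    have hsc := small_core b t (k-t) k hn1 hδ1 ht1 hδb (by omega) (by omega) (le_refl _)
      htb F G A0 hA0F hA0sm hFc hcr
      (lt_of_le_of_lt (Nat.mul_le_mul_left _ hpowkl) hGbig)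
    have : Wc b * n ^ (k-t-1) < Wc b * n ^ (k-t-1) := by
      calc Wc b * n ^ (k-t-1) < F.card := hFbig
        _ ≤ 2^(5*(b+2)+2) * n^(k-t-1) := hsc
        _ ≤ Wc b * n^(k-t-1) := Nat.mul_le_mul_right _ (le_of_lt (const_c2 b))
    omega
  -- no small sets in G
  have hGt : ∀ B ∈ G, t ≤ B.card := by
    by_contra hcon
    push_neg at hcon
    obtain ⟨B0, hB0G, hB0sm⟩ := hcon
    have hsc := small_core b t (k-t) l hn1 hδ1 ht1 hδb hlb (by omega) (by omega)
      htb G F B0 hB0G hB0sm hGc hcr' hFbig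
    have : Wc b * n ^ (l-t-1) < Wc b * n ^ (l-t-1) := by
      calc Wc b * n ^ (l-t-1) < G.card := hGbig
        _ ≤ 2^(5*(b+2)+2) * n^(l-t-1) := hsc
        _ ≤ Wc b * n^(l-t-1) := Nat.mul_le_mul_right _ (le_of_lt (const_c2 b))
    omega
  -- sunflower in F
  obtain ⟨Y, PP, hPPF, hPPcard, hPPpair, hYcard, hYpet⟩ :=
    sunflower_core hn1 ht1 (by omega) (by omega) F hFc hFt hFbig
  have hdich := sunflower_dichotomy hn1 hlb Y PP F G hPPF hPPcard hPPpair hYpet hGc hcr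
  -- bad part of G is small
  set Gbad := G.filter (fun B => ¬ t ≤ (B ∩ Y).card) with hGbad
  have hbad : Gbad.card ≤ 2^b * ((k-t) * n^(k-t-1)) := by
    have hstep := card_le_split Gbad Y (fun B => B ∩ Y) (fun B => B \ Y) (k-t-1)
      (fun B _ => Finset.inter_subset_right)
      (fun B hB => by
        rw [hGbad, Finset.mem_filter] at hB
        rcases hdich B hB.1 with h | h
        · exact absurd h hB.2
        · exact h)
      (fun B hB B' hB' h1 h2 => by
        rw [← inter_union_sdiff' B Y, ← inter_union_sdiff' B' Y, h1, h2]) hn1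
    calc Gbad.card ≤ 2^(Y.card) * ((k-t-1+1) * n^(k-t-1)) := hstep
      _ ≤ 2^b * ((k-t) * n^(k-t-1)) := by
          have e1 : (2:ℕ)^(Y.card) ≤ 2^b := pow2_mono hYcard
          have e2 : k-t-1+1 ≤ k-t := by omega
          exact Nat.mul_le_mul e1 (Nat.mul_le_mul_right _ e2)
  set Gint := G.filter (fun B => t ≤ (B ∩ Y).card) with hGint
  have hGsplit : Gint.card + Gbad.card = G.card :=
    Finset.card_filter_add_card_filter_not (fun B => t ≤ (B ∩ Y).card)
  have hbadl : Gbad.card ≤ 2^b * b * n^(l-t-1) := by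
    calc Gbad.card ≤ 2^b * ((k-t) * n^(k-t-1)) := hbad
      _ ≤ 2^b * (b * n^(l-t-1)) :=
          Nat.mul_le_mul_left _ (Nat.mul_le_mul hδb hpowkl)
      _ = 2^b * b * n^(l-t-1) := by ring
  -- Gint nonempty hence t ≤ Y.card
  have hGintpos : 0 < Gint.card := by
    have hc : 2^b * b * n^(l-t-1) < Wc b * n^(l-t-1) := by
      have hpos : 0 < n^(l-t-1) := Nat.pow_pos (by omega)
      apply Nat.mul_lt_mul_of_lt_of_le _ (le_refl _) hpos
      calc 2^b * b ≤ 2^b * (b^2+2*b) := by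
            apply Nat.mul_le_mul_left
            nlinarith
        _ < Wc b := const_c6 b
    omega
  have hYt : t ≤ Y.card := by
    obtain ⟨B, hB⟩ := Finset.card_pos.mp hGintpos
    rw [hGint, Finset.mem_filter] at hB
    calc t ≤ (B ∩ Y).card := hB.2
      _ ≤ Y.card := Finset.card_le_card Finset.inter_subset_right
  -- pigeonhole: a popular t-subset T of Y
  have hpne : (Y.powersetCard t).Nonempty := Finset.powersetCard_nonempty.mpr hYt
  obtain ⟨T, hTmem, hTmax⟩ := (Y.powersetCard t).exists_max_image
    (fun T => (G.filter (fun B => T ⊆ B)).card) hpne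
  obtain ⟨hTY, hTcard⟩ := Finset.mem_powersetCard.mp hTmem
  set GT := G.filter (fun B => T ⊆ B) with hGT
  have hpigeon : Gint.card ≤ 2^b * GT.card := by
    have hcov : Gint ⊆ (Y.powersetCard t).biUnion (fun T' => G.filter (fun B => T' ⊆ B)) := by
      intro B hB
      rw [hGint, Finset.mem_filter] at hB
      obtain ⟨T', hT'sub, hT'card⟩ := Finset.exists_subset_card_eq hB.2
      refine Finset.mem_biUnion.mpr ⟨T', ?_, ?_⟩
      · exact Finset.mem_powersetCard.mpr ⟨hT'sub.trans Finset.inter_subset_right, hT'card⟩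
      · exact Finset.mem_filter.mpr ⟨hB.1, hT'sub.trans Finset.inter_subset_left⟩
    calc Gint.card ≤ _ := Finset.card_le_card hcov
      _ ≤ ∑ T' ∈ Y.powersetCard t, (G.filter (fun B => T' ⊆ B)).card := Finset.card_biUnion_le
      _ ≤ ∑ _T' ∈ Y.powersetCard t, GT.card := Finset.sum_le_sum (fun T' hT' => hTmax T' hT')
      _ = (Y.powersetCard t).card * GT.card := by rw [Finset.sum_const, smul_eq_mul]
      _ ≤ 2^b * GT.card := by
          apply Nat.mul_le_mul_right
          rw [Finset.card_powersetCard]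
          calc Y.card.choose t ≤ 2^(Y.card) := choose_le_two_pow' hYt
            _ ≤ 2^b := pow2_mono hYcard
  -- step β: every A ∈ F contains T
  have hFT : ∀ A ∈ F, T ⊆ A := by
    by_contra hcon
    push_neg at hcon
    obtain ⟨A, hAF, hTA⟩ := hcon
    obtain ⟨x, hxT, hxA⟩ := Finset.not_subset.mp hTA
    -- close part of GT
    have h1 : (GT.filter (fun B => ¬ t ≤ (A ∩ B).card)).card ≤ (k-t) * n^(k-t-1) := by
      have := card_marked_ball (GT.filter (fun B => ¬ t ≤ (A ∩ B).card)) A x (k-t-1)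
        (fun B hB => by
          rw [Finset.mem_filter] at hB
          have hBG : B ∈ G := (Finset.mem_filter.mp hB.1).1
          have hTB : T ⊆ B := (Finset.mem_filter.mp hB.1).2
          constructor
          · rw [Finset.mem_symmDiff]
            exact Or.inr ⟨hTB hxT, hxA⟩
          · have := hcr A hAF B hBG (by omega)
            omega) hn1
      calc (GT.filter (fun B => ¬ t ≤ (A ∩ B).card)).card ≤ (k-t-1+1) * n^(k-t-1) := this
        _ = (k-t) * n^(k-t-1) := by congr 1; omega
    -- t-intersecting part of GT
    have h2 : (GT.filter (fun B => t ≤ (A ∩ B).card)).card ≤ b * ((l-t) * n^(l-t-1)) := by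
      have hATcard : (A ∩ T).card < t := by
        have hsub : A ∩ T ⊆ T := Finset.inter_subset_right
        have hne : A ∩ T ≠ T := by
          intro h
          exact hTA (by rw [← h]; exact Finset.inter_subset_left)
        have := Finset.card_lt_card (Finset.ssubset_iff_subset_ne.mpr ⟨hsub, hne⟩)
        omega
      have hcov : GT.filter (fun B => t ≤ (A ∩ B).card) ⊆
          (A \ T).biUnion (fun x' => G.filter (fun B => insert x' T ⊆ B)) := by
        intro B hB
        rw [Finset.mem_filter] at hB
        have hBG : B ∈ G := (Finset.mem_filter.mp hB.1).1
        have hTB : T ⊆ B := (Finset.mem_filter.mp hB.1).2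
        have hns : ¬ (A ∩ B ⊆ T) := by
          intro hsub
          have : A ∩ B ⊆ A ∩ T := by
            intro y hy
            rw [Finset.mem_inter] at hy ⊢
            exact ⟨hy.1, hsub (Finset.mem_inter.mpr hy)⟩
          have := Finset.card_le_card this
          have h2 := hB.2
          omega
        obtain ⟨x', hx'1, hx'2⟩ := Finset.not_subset.mp hns
        rw [Finset.mem_inter] at hx'1
        refine Finset.mem_biUnion.mpr ⟨x', ?_, ?_⟩
        · rw [Finset.mem_sdiff]; exact ⟨hx'1.1, hx'2⟩
        · rw [Finset.mem_filter]
          exact ⟨hBG, Finset.insert_subset hx'1.2 hTB⟩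
      calc (GT.filter (fun B => t ≤ (A ∩ B).card)).card
          ≤ _ := Finset.card_le_card hcov
        _ ≤ ∑ x' ∈ A \ T, (G.filter (fun B => insert x' T ⊆ B)).card := Finset.card_biUnion_le
        _ ≤ ∑ _x' ∈ A \ T, (l-t) * n^(l-t-1) := by
            apply Finset.sum_le_sum
            intro x' hx'
            rw [Finset.mem_sdiff] at hx'
            have hins : (insert x' T).card = t + 1 := by
              rw [Finset.card_insert_of_notMem hx'.2, hTcard]
            have hstep := card_superset (G.filter (fun B => insert x' T ⊆ B)) (insert x' T) l
              (fun B hB => ⟨(Finset.mem_filter.mp hB).2, hGc B (Finset.mem_filter.mp hB).1⟩) hn1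
            rw [hins] at hstep
            calc (G.filter (fun B => insert x' T ⊆ B)).card
                ≤ (l - (t+1) + 1) * n^(l-(t+1)) := hstep
              _ ≤ (l-t) * n^(l-t-1) := by
                  have e1 : l - (t+1) + 1 ≤ l - t := by omega
                  have e2 : l - (t+1) = l-t-1 := by omega
                  rw [e2]
                  exact Nat.mul_le_mul_right _ e1
        _ = (A \ T).card * ((l-t) * n^(l-t-1)) := by rw [Finset.sum_const, smul_eq_mul]
        _ ≤ b * ((l-t) * n^(l-t-1)) := by
            apply Nat.mul_le_mul_right
            calc (A \ T).card ≤ A.card := Finset.card_le_card Finset.sdiff_subset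
              _ ≤ k := hFc A hAF
              _ ≤ b := by omega
    have hGTsplit : (GT.filter (fun B => t ≤ (A ∩ B).card)).card
        + (GT.filter (fun B => ¬ t ≤ (A ∩ B).card)).card = GT.card :=
      Finset.card_filter_add_card_filter_not (fun B => t ≤ (A ∩ B).card)
    have hGTle : GT.card ≤ (b*b + b) * n^(l-t-1) := by
      have e1 : b * ((l-t) * n^(l-t-1)) ≤ b*b*n^(l-t-1) := by
        calc b * ((l-t) * n^(l-t-1)) ≤ b * (b * n^(l-t-1)) :=
              Nat.mul_le_mul_left _ (Nat.mul_le_mul_right _ (by omega))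
          _ = b*b*n^(l-t-1) := by ring
      have e2 : (k-t) * n^(k-t-1) ≤ b * n^(l-t-1) := Nat.mul_le_mul hδb hpowkl
      have e4 : b*b*n^(l-t-1) + b*n^(l-t-1) = (b*b+b)*n^(l-t-1) := by ring
      omega
    -- contradiction with size of G
    have hGle : G.card ≤ 2^b * (b^2+2*b) * n^(l-t-1) := by
      have e1 : Gint.card ≤ 2^b * ((b*b+b) * n^(l-t-1)) := by
        calc Gint.card ≤ 2^b * GT.card := hpigeon
          _ ≤ 2^b * ((b*b+b) * n^(l-t-1)) := Nat.mul_le_mul_left _ hGTle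
      have e3 : 2^b * ((b*b+b) * n^(l-t-1)) + 2^b * b * n^(l-t-1)
          = 2^b * (b^2+2*b) * n^(l-t-1) := by ring
      omega
    have : Wc b * n^(l-t-1) < Wc b * n^(l-t-1) := by
      calc Wc b * n^(l-t-1) < G.card := hGbig
        _ ≤ 2^b * (b^2+2*b) * n^(l-t-1) := hGle
        _ ≤ Wc b * n^(l-t-1) := Nat.mul_le_mul_right _ (le_of_lt (const_c6 b))
    omega
  -- final step: every B ∈ G contains T
  have hGTall : ∀ B ∈ G, T ⊆ B := by
    by_contra hcon
    push_neg at hcon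
    obtain ⟨B, hBG, hTB⟩ := hcon
    obtain ⟨x, hxT, hxB⟩ := Finset.not_subset.mp hTB
    have h1 : (F.filter (fun A => ¬ t ≤ (A ∩ B).card)).card ≤ (k-t) * n^(k-t-1) := by
      have := card_marked_ball (F.filter (fun A => ¬ t ≤ (A ∩ B).card)) B x (k-t-1)
        (fun A hA => by
          rw [Finset.mem_filter] at hA
          constructor
          · rw [Finset.mem_symmDiff]
            exact Or.inr ⟨hFT A hA.1 hxT, hxB⟩
          · have := hcr' B hBG A hA.1 (by rw [Finset.inter_comm]; omega)
            omega) hn1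
      calc (F.filter (fun A => ¬ t ≤ (A ∩ B).card)).card ≤ (k-t-1+1) * n^(k-t-1) := this
        _ = (k-t) * n^(k-t-1) := by congr 1; omega
    have h2 : (F.filter (fun A => t ≤ (A ∩ B).card)).card ≤ b * ((k-t) * n^(k-t-1)) := by
      have hBTcard : (B ∩ T).card < t := by
        have hne : B ∩ T ≠ T := by
          intro h
          exact hTB (by rw [← h]; exact Finset.inter_subset_left)
        have := Finset.card_lt_card (Finset.ssubset_iff_subset_ne.mpr
          ⟨Finset.inter_subset_right, hne⟩)
        omega
      have hcov : F.filter (fun A => t ≤ (A ∩ B).card) ⊆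
          (B \ T).biUnion (fun x' => F.filter (fun A => insert x' T ⊆ A)) := by
        intro A hA
        rw [Finset.mem_filter] at hA
        have hns : ¬ (A ∩ B ⊆ T) := by
          intro hsub
          have hsub2 : A ∩ B ⊆ B ∩ T := by
            intro y hy
            rw [Finset.mem_inter] at hy ⊢
            exact ⟨hy.2, hsub (Finset.mem_inter.mpr hy)⟩
          have := Finset.card_le_card hsub2
          have ht2 := hA.2
          omega
        obtain ⟨x', hx'1, hx'2⟩ := Finset.not_subset.mp hns
        rw [Finset.mem_inter] at hx'1
        refine Finset.mem_biUnion.mpr ⟨x', ?_, ?_⟩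
        · rw [Finset.mem_sdiff]; exact ⟨hx'1.2, hx'2⟩
        · rw [Finset.mem_filter]
          exact ⟨hA.1, Finset.insert_subset hx'1.1 (hFT A hA.1)⟩
      calc (F.filter (fun A => t ≤ (A ∩ B).card)).card
          ≤ _ := Finset.card_le_card hcov
        _ ≤ ∑ x' ∈ B \ T, (F.filter (fun A => insert x' T ⊆ A)).card := Finset.card_biUnion_le
        _ ≤ ∑ _x' ∈ B \ T, (k-t) * n^(k-t-1) := by
            apply Finset.sum_le_sum
            intro x' hx'
            rw [Finset.mem_sdiff] at hx'
            have hins : (insert x' T).card = t + 1 := by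
              rw [Finset.card_insert_of_notMem hx'.2, hTcard]
            have hstep := card_superset (F.filter (fun A => insert x' T ⊆ A)) (insert x' T) k
              (fun A hA => ⟨(Finset.mem_filter.mp hA).2, hFc A (Finset.mem_filter.mp hA).1⟩) hn1
            rw [hins] at hstep
            calc (F.filter (fun A => insert x' T ⊆ A)).card
                ≤ (k - (t+1) + 1) * n^(k-(t+1)) := hstep
              _ ≤ (k-t) * n^(k-t-1) := by
                  have e1 : k - (t+1) + 1 ≤ k - t := by omega
                  have e2 : k - (t+1) = k-t-1 := by omega
                  rw [e2]
                  exact Nat.mul_le_mul_right _ e1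
        _ = (B \ T).card * ((k-t) * n^(k-t-1)) := by rw [Finset.sum_const, smul_eq_mul]
        _ ≤ b * ((k-t) * n^(k-t-1)) := by
            apply Nat.mul_le_mul_right
            calc (B \ T).card ≤ B.card := Finset.card_le_card Finset.sdiff_subset
              _ ≤ l := hGc B hBG
              _ ≤ b := hlb
    have hFsplit : (F.filter (fun A => t ≤ (A ∩ B).card)).card
        + (F.filter (fun A => ¬ t ≤ (A ∩ B).card)).card = F.card :=
      Finset.card_filter_add_card_filter_not (fun A => t ≤ (A ∩ B).card)
    have hFle : F.card ≤ (b*b + b) * n^(k-t-1) := by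
      have e1 : b * ((k-t) * n^(k-t-1)) ≤ b*b*n^(k-t-1) := by
        calc b * ((k-t) * n^(k-t-1)) ≤ b * (b * n^(k-t-1)) :=
              Nat.mul_le_mul_left _ (Nat.mul_le_mul_right _ hδb)
          _ = b*b*n^(k-t-1) := by ring
      have e2 : (k-t) * n^(k-t-1) ≤ b * n^(k-t-1) := Nat.mul_le_mul_right _ hδb
      have e4 : b*b*n^(k-t-1) + b*n^(k-t-1) = (b*b+b)*n^(k-t-1) := by ring
      omega
    have : Wc b * n^(k-t-1) < Wc b * n^(k-t-1) := by
      calc Wc b * n^(k-t-1) < F.card := hFbig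
        _ ≤ (b*b+b) * n^(k-t-1) := hFle
        _ ≤ Wc b * n^(k-t-1) := by
            apply Nat.mul_le_mul_right
            have := const_c4 b
            nlinarith
    omega
  exact ⟨T, hTcard, hFT, hGTall⟩

/-- The threshold for the pair bound. -/
def Npair (b t : ℕ) : ℕ :=
  Wc b * 2^(5*(b+2)) * Nat.factorial b * Nat.factorial b * 2^(2*b+2) + 4*b + 2

lemma arith_wrap {n b t : ℕ} (hn : Npair b t ≤ n) {C m₁ m₂ : ℕ}
    (hC : C ≤ Wc b * 2^(5*(b+2))) (h₁ : m₁ ≤ b) (h₂ : m₂ ≤ b) :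
    C * Nat.factorial b * Nat.factorial b * 2^(m₁+m₂) ≤ n := by
  have h2 : (2:ℕ)^(m₁+m₂) ≤ 2^(2*b+2) := pow2_mono (by omega)
  calc C * Nat.factorial b * Nat.factorial b * 2^(m₁+m₂)
      ≤ Wc b * 2^(5*(b+2)) * Nat.factorial b * Nat.factorial b * 2^(2*b+2) := by
        apply Nat.mul_le_mul _ h2
        apply Nat.mul_le_mul_right
        apply Nat.mul_le_mul_right
        exact hC
    _ ≤ n := by
        have := hn
        rw [Npair] at this
        omega

/-- The two-family theorem. -/
theorem pair_bound {n : ℕ} (b t k l : ℕ) (ht1 : 1 ≤ t) (htk : t ≤ k) (hkl : k ≤ l)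
    (hlb : l ≤ b) (hn : Npair b t ≤ n)
    (F G : Finset (Finset (Fin n)))
    (hFc : ∀ A ∈ F, A.card ≤ k) (hGc : ∀ B ∈ G, B.card ≤ l)
    (hcr : ∀ A ∈ F, ∀ B ∈ G, (A ∩ B).card < t → (A ∆ B).card ≤ k - t) :
    F.card * G.card ≤ (∑ s ∈ Finset.range (k-t+1), (n-t).choose s)
      * (∑ s ∈ Finset.range (l-t+1), (n-t).choose s) := by
  classical
  have hnpair := hn
  rw [Npair] at hnpair
  have hn1 : 1 ≤ n := by omega
  have hbase : 4*b + 2 ≤ n := by omega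
  have htb : t ≤ b := by omega
  set S1 := ∑ s ∈ Finset.range (k-t+1), (n-t).choose s with hS1def
  set S2 := ∑ s ∈ Finset.range (l-t+1), (n-t).choose s with hS2def
  have hS1c : (n-t).choose (k-t) ≤ S1 := choose_le_S _ _
  have hS2c : (n-t).choose (l-t) ≤ S2 := choose_le_S _ _
  have hS1one : 1 ≤ S1 := one_le_S _ _
  have hS2one : 1 ≤ S2 := one_le_S _ _
  rcases Finset.eq_empty_or_nonempty F with hFe | ⟨Astar, hAstar⟩
  · rw [hFe]; simp
  rcases Finset.eq_empty_or_nonempty G with hGe | ⟨Bstar, hBstar⟩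
  · rw [hGe]; simp
  -- a helper for the final arithmetic step
  have endgame : ∀ C m₁ m₂ : ℕ, C ≤ Wc b * 2^(5*(b+2)) → m₁ ≤ b → m₂ ≤ b →
      1 ≤ m₁ + m₂ → m₁ ≤ k - t → m₂ ≤ l - t →
      F.card * G.card ≤ C * n^(m₁ + m₂ - 1) →
      (n-t).choose m₁ = (n-t).choose (k-t) → (n-t).choose m₂ = (n-t).choose (l-t) →
      F.card * G.card ≤ S1 * S2 := by
    intro C m₁ m₂ hC h₁ h₂ hM _ _ hprod he1 he2
    have harith := arith_main (n := n) (t := t) (B := b) (C := C) htb h₁ h₂ hM hbase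
      (arith_wrap hn hC h₁ h₂)
    calc F.card * G.card ≤ C * n^(m₁+m₂-1) := hprod
      _ ≤ (n-t).choose m₁ * (n-t).choose m₂ := harith
      _ = (n-t).choose (k-t) * (n-t).choose (l-t) := by rw [he1, he2]
      _ ≤ S1 * S2 := Nat.mul_le_mul hS1c hS2c
  by_cases hkt : k = t
  · -- the degenerate case k = t
    have hprop : ∀ A ∈ F, ∀ B ∈ G, (A ⊆ B ∧ A.card = t) ∨ (A = B ∧ A.card < t) := by
      intro A hA B hB
      by_cases hc : (A ∩ B).card < t
      · right
        have hΔ := hcr A hA B hB hc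
        rw [hkt] at hΔ
        simp only [Nat.sub_self, Nat.le_zero] at hΔ
        have hAB : A = B := by
          have : A ∆ B = ∅ := Finset.card_eq_zero.mp hΔ
          have h2 : A ∆ B = ⊥ := this
          exact symmDiff_eq_bot.mp h2
        refine ⟨hAB, ?_⟩
        rw [hAB] at hc ⊢
        rwa [Finset.inter_self] at hc
      · left
        push_neg at hc
        have hAk : A.card ≤ t := by rw [← hkt]; exact hFc A hA
        have hinA : A ∩ B = A := by
          apply Finset.eq_of_subset_of_card_le Finset.inter_subset_left
          omega
        refine ⟨Finset.inter_eq_left.mp hinA, ?_⟩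
        have hAle : (A ∩ B).card ≤ A.card := Finset.card_le_card Finset.inter_subset_left
        omega
    by_cases hsm : ∃ A0 ∈ F, A0.card < t
    · obtain ⟨A0, hA0F, hA0sm⟩ := hsm
      have hGsub : ∀ B ∈ G, B = A0 := by
        intro B hB
        rcases hprop A0 hA0F B hB with ⟨_, hcard⟩ | ⟨heq, _⟩
        · omega
        · exact heq.symm
      have hFsub : ∀ A ∈ F, A = A0 := by
        intro A hA
        have hBst := hGsub Bstar hBstar
        rcases hprop A hA Bstar hBstar with ⟨hsub, hcard⟩ | ⟨heq, _⟩
        · rw [hBst] at hsub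
          have := Finset.card_le_card hsub
          omega
        · rw [heq, hBst]
      have hF1 : F.card ≤ 1 := Finset.card_le_one.mpr
        (fun a ha b hb => by rw [hFsub a ha, hFsub b hb])
      have hG1 : G.card ≤ 1 := Finset.card_le_one.mpr
        (fun a ha b hb => by rw [hGsub a ha, hGsub b hb])
      calc F.card * G.card ≤ 1 * 1 := Nat.mul_le_mul hF1 hG1
        _ ≤ S1 * S2 := Nat.mul_le_mul hS1one hS2one
    · push_neg at hsm
      have hcardt : ∀ A ∈ F, A.card = t := by
        intro A hA
        have h1 := hsm A hA
        have h2 : A.card ≤ t := by rw [← hkt]; exact hFc A hA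
        omega
      have hAB : ∀ A ∈ F, ∀ B ∈ G, A ⊆ B := by
        intro A hA B hB
        rcases hprop A hA B hB with ⟨hsub, _⟩ | ⟨_, hcard⟩
        · exact hsub
        · have := hcardt A hA; omega
      by_cases hF1 : F.card ≤ 1
      · have hFone : F.card = 1 := by
          have := Finset.card_pos.mpr ⟨Astar, hAstar⟩
          omega
        obtain ⟨a, hFa⟩ := Finset.card_eq_one.mp hFone
        have haF : a ∈ F := by rw [hFa]; exact Finset.mem_singleton_self a
        have hacard : a.card = t := hcardt a haF
        have hFbound : F.card ≤ S1 := by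
          have := card_superset_choose F a k (fun A hA => by
            rw [hFa, Finset.mem_singleton] at hA
            exact ⟨by rw [hA], hFc A (by rw [hFa, hA]; exact Finset.mem_singleton_self a)⟩)
          rwa [hacard] at this
        have hGbound : G.card ≤ S2 := by
          have := card_superset_choose G a l (fun B hB => ⟨hAB a haF B hB, hGc B hB⟩)
          rwa [hacard] at this
        exact Nat.mul_le_mul hFbound hGbound
      · push_neg at hF1
        obtain ⟨A1, hA1, A2, hA2, hA12⟩ := Finset.one_lt_card.mp hF1
        have hsubs : ∀ B ∈ G, A1 ∪ A2 ⊆ B :=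
          fun B hB => Finset.union_subset (hAB A1 hA1 B hB) (hAB A2 hA2 B hB)
        have hcard12 : t + 1 ≤ (A1 ∪ A2).card := by
          have h1 : A1 ⊆ A1 ∪ A2 := Finset.subset_union_left
          have h2 := hcardt A1 hA1
          have h3 := hcardt A2 hA2
          by_contra hcon
          push_neg at hcon
          have heq : A1 = A1 ∪ A2 := Finset.eq_of_subset_of_card_le h1 (by omega)
          have : A2 ⊆ A1 := by rw [heq]; exact Finset.subset_union_right
          exact hA12 (Finset.eq_of_subset_of_card_le this (by omega)).symm
        have hlt1 : t + 1 ≤ l := by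
          calc t + 1 ≤ (A1 ∪ A2).card := hcard12
            _ ≤ Bstar.card := Finset.card_le_card (hsubs Bstar hBstar)
            _ ≤ l := hGc Bstar hBstar
        have hGbound : G.card ≤ (l-t) * n^(l-t-1) := by
          have hstep := card_superset G (A1 ∪ A2) l (fun B hB => ⟨hsubs B hB, hGc B hB⟩) hn1
          calc G.card ≤ (l - (A1 ∪ A2).card + 1) * n^(l - (A1 ∪ A2).card) := hstep
            _ ≤ (l-t) * n^(l-t-1) := by
                apply Nat.mul_le_mul
                · omega
                · exact Nat.pow_le_pow_right hn1 (by omega)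
        have hFbound : F.card ≤ 2^b := by
          have hsub : F ⊆ Bstar.powersetCard t := by
            intro A hA
            rw [Finset.mem_powersetCard]
            exact ⟨hAB A hA Bstar hBstar, hcardt A hA⟩
          calc F.card ≤ (Bstar.powersetCard t).card := Finset.card_le_card hsub
            _ = Bstar.card.choose t := Finset.card_powersetCard _ _
            _ ≤ 2^(Bstar.card) := choose_le_two_pow' (by
                have := hcardt A1 hA1
                calc t = A1.card := this.symm
                  _ ≤ Bstar.card := Finset.card_le_card (hAB A1 hA1 Bstar hBstar))
            _ ≤ 2^b := pow2_mono (le_trans (hGc Bstar hBstar) hlb)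
        apply endgame (2^b * b) 0 (l-t) _ (by omega) (by omega) (by omega) (by omega)
          (le_refl _) _ _ _
        · calc 2^b * b ≤ 2^(5*(b+2)) * Wc b := by
                apply Nat.mul_le_mul (pow2_mono (by omega))
                calc b ≤ b^2+b+1 := by nlinarith
                  _ ≤ Wc b := const_c4 b
            _ = Wc b * 2^(5*(b+2)) := by ring
        · calc F.card * G.card ≤ 2^b * ((l-t) * n^(l-t-1)) := Nat.mul_le_mul hFbound hGbound
            _ ≤ 2^b * (b * n^(0 + (l-t) - 1)) := by
                apply Nat.mul_le_mul_left
                apply Nat.mul_le_mul (by omega)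
                apply Nat.pow_le_pow_right hn1 (by omega)
            _ = 2^b * b * n^(0 + (l-t) - 1) := by ring
        · rw [hkt]; simp
        · rfl
  · -- main case k ≥ t + 1
    have htk1 : t + 1 ≤ k := by omega
    by_cases hFbig : F.card ≤ Wc b * n^(k-t-1)
    · -- F is small, use the crude bound on G
      have hGbound : G.card ≤ 2^(5*(b+2)) * n^(l-t) := by
        apply crude_bound b t l G Astar (le_trans (hFc Astar hAstar) (by omega)) (by omega)
          hlb hn1 hGc
        intro B hB hint
        exact le_trans (hcr Astar hAstar B hB hint) (by omega)
      apply endgame (Wc b * 2^(5*(b+2))) (k-t) (l-t) (le_refl _) (by omega) (by omega)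
        (by omega) (le_refl _) (le_refl _) _ rfl rfl
      calc F.card * G.card ≤ (Wc b * n^(k-t-1)) * (2^(5*(b+2)) * n^(l-t)) :=
            Nat.mul_le_mul hFbig hGbound
        _ = (Wc b * 2^(5*(b+2))) * (n^(k-t-1) * n^(l-t)) := by ring
        _ = (Wc b * 2^(5*(b+2))) * n^((k-t) + (l-t) - 1) := by
            rw [← pow_add]
            have hexp : k-t-1 + (l-t) = (k-t)+(l-t)-1 := by omega
            rw [hexp]
    · by_cases hGbig : G.card ≤ Wc b * n^(l-t-1)
      · -- G is small, use the crude bound on F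
        have hFbound : F.card ≤ 2^(5*(b+2)) * n^(k-t) := by
          apply crude_bound b t k F Bstar (le_trans (hGc Bstar hBstar) hlb) htk (by omega)
            hn1 hFc
          intro A hA hint
          rw [symmDiff_comm]
          exact hcr A hA Bstar hBstar (by rwa [Finset.inter_comm])
        apply endgame (Wc b * 2^(5*(b+2))) (k-t) (l-t) (le_refl _) (by omega) (by omega)
          (by omega) (le_refl _) (le_refl _) _ rfl rfl
        calc F.card * G.card ≤ (2^(5*(b+2)) * n^(k-t)) * (Wc b * n^(l-t-1)) :=
              Nat.mul_le_mul hFbound hGbig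
          _ = (Wc b * 2^(5*(b+2))) * (n^(k-t) * n^(l-t-1)) := by ring
          _ = (Wc b * 2^(5*(b+2))) * n^((k-t) + (l-t) - 1) := by
              rw [← pow_add]
              have hexp : k-t + (l-t-1) = (k-t)+(l-t)-1 := by omega
              rw [hexp]
      · -- both families are large: extract a common kernel
        push_neg at hFbig hGbig
        obtain ⟨T, hTcard, hFT, hGT⟩ := extract hn1 ht1 htk1 hkl hlb F G hFc hGc hcr
          hFbig hGbig
        have hFbound : F.card ≤ S1 := by
          have := card_superset_choose F T k (fun A hA => ⟨hFT A hA, hFc A hA⟩)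
          rwa [hTcard] at this
        have hGbound : G.card ≤ S2 := by
          have := card_superset_choose G T l (fun B hB => ⟨hGT B hB, hGc B hB⟩)
          rwa [hTcard] at this
        exact Nat.mul_le_mul hFbound hGbound

end SF

open Finset
open scoped symmDiff

theorem stmt_16 : ∃ n0 : ℕ → ℕ → ℕ → ℕ,
    ∀ (n r : ℕ) (hr : 2 ≤ r) (t : ℕ) (kk : Fin r → ℕ),
    1 ≤ t → (∀ j, t ≤ kk j) → Monotone kk → (∀ j, kk j ≤ n) →
    n0 (kk ⟨r - 2, by omega⟩) (kk ⟨r - 1, by omega⟩) t ≤ n →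
    ∀ F : Fin r → Finset (Finset (Fin n)),
      (∀ i, ∀ A ∈ F i, A.card ≤ kk i) →
      (∀ i j, i ≠ j → ∀ A ∈ F i, ∀ B ∈ F j, (A ∩ B).card < t →
        ((A \ B) ∪ (B \ A)).card ≤ min (kk i) (kk j) - t) →
      ∏ i, (F i).card ≤
        ∏ i, ∑ j ∈ Finset.range (kk i - t + 1), (n - t).choose (kk i - t - j) := by
  refine ⟨fun _ b t => SF.Npair b t, ?_⟩
  intro n r hr t kk ht1 htkk hmono hkkn hn F hFc hcross
  have hlast : r - 1 < r := by omega
  set last : Fin r := ⟨r - 1, hlast⟩ with hlastdef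
  set b := kk last with hbdef
  have hb : ∀ j : Fin r, kk j ≤ b := by
    intro j
    apply hmono
    rw [Fin.le_def]
    have := j.isLt
    simp only [hlastdef]
    omega
  have hn' : SF.Npair b t ≤ n := hn
  have hsd : ∀ A B : Finset (Fin n), (A \ B) ∪ (B \ A) = A ∆ B := by
    intro A B
    rw [symmDiff_def, sup_eq_union]
  set x : Fin r → ℕ := fun i => (F i).card with hxdef
  set y : Fin r → ℕ := fun i => ∑ s ∈ Finset.range (kk i - t + 1), (n - t).choose s with hydef
  have hy1 : ∀ i, 1 ≤ y i := fun i => SF.one_le_S _ _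
  -- convert the target
  have htarget : ∀ i : Fin r,
      (∑ j ∈ Finset.range (kk i - t + 1), (n - t).choose (kk i - t - j)) = y i := by
    intro i
    have h := Finset.sum_range_reflect (fun s => (n - t).choose s) (kk i - t + 1)
    exact h
  -- pairwise bound
  have hpair : ∀ i j : Fin r, i ≠ j → x i * x j ≤ y i * y j := by
    intro i j hij
    rcases le_total (kk i) (kk j) with h | h
    · apply SF.pair_bound b t (kk i) (kk j) ht1 (htkk i) h (hb j) hn' (F i) (F j)
        (hFc i) (hFc j)
      intro A hA B hB hint
      have hc := hcross i j hij A hA B hB hint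
      rw [hsd A B] at hc
      rwa [inf_eq_left.mpr h] at hc
    · rw [Nat.mul_comm (x i), Nat.mul_comm (y i)]
      apply SF.pair_bound b t (kk j) (kk i) ht1 (htkk j) h (hb i) hn' (F j) (F i)
        (hFc j) (hFc i)
      intro B hB A hA hint
      have hc := hcross j i (Ne.symm hij) B hB A hA hint
      rw [hsd B A] at hc
      rwa [inf_eq_left.mpr h] at hc
  -- reduce to the product statement
  have hXY : ∏ i, x i ≤ ∏ i, y i := by
    have hYpos : 0 < ∏ i, y i := Finset.prod_pos (fun i _ => by have := hy1 i; omega)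
    by_cases hX0 : ∏ i, x i = 0
    · rw [hX0]; exact Nat.zero_le _
    have hXpos : 0 < ∏ i, x i := Nat.pos_of_ne_zero hX0
    have hcarderase : ∀ i : Fin r, (Finset.univ.erase i).card = r - 1 := by
      intro i
      rw [Finset.card_erase_of_mem (Finset.mem_univ i)]
      simp
    have hidaux : ∀ (z : Fin r → ℕ) (i : Fin r),
        ∏ j ∈ Finset.univ.erase i, (z i * z j)
        = z i ^ (r-1) * ∏ j ∈ Finset.univ.erase i, z j := by
      intro z i
      rw [Finset.prod_mul_distrib, Finset.prod_const, hcarderase i]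
    have hP : ∀ (z : Fin r → ℕ),
        ∏ i, ∏ j ∈ Finset.univ.erase i, (z i * z j)
        = (∏ i, z i)^(r-1) * ∏ i, ∏ j ∈ Finset.univ.erase i, z j := by
      intro z
      calc ∏ i, ∏ j ∈ Finset.univ.erase i, (z i * z j)
          = ∏ i, (z i ^ (r-1) * ∏ j ∈ Finset.univ.erase i, z j) :=
            Finset.prod_congr rfl (fun i _ => hidaux z i)
        _ = (∏ i, z i ^ (r-1)) * ∏ i, ∏ j ∈ Finset.univ.erase i, z j :=
            Finset.prod_mul_distrib
        _ = (∏ i, z i)^(r-1) * ∏ i, ∏ j ∈ Finset.univ.erase i, z j := by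
            rw [Finset.prod_pow]
    have hXE : ∀ (z : Fin r → ℕ),
        (∏ i, z i) * (∏ i, ∏ j ∈ Finset.univ.erase i, z j) = (∏ i, z i)^r := by
      intro z
      calc (∏ i, z i) * (∏ i, ∏ j ∈ Finset.univ.erase i, z j)
          = ∏ i, (z i * ∏ j ∈ Finset.univ.erase i, z j) := by
            rw [Finset.prod_mul_distrib]
        _ = ∏ _i : Fin r, (∏ j, z j) :=
            Finset.prod_congr rfl (fun i _ => Finset.mul_prod_erase _ _ (Finset.mem_univ i))
        _ = (∏ j, z j)^r := by
            rw [Finset.prod_const]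
            congr 1
            simp
    have hEeq : ∀ (z : Fin r → ℕ), 0 < ∏ i, z i →
        ∏ i, ∏ j ∈ Finset.univ.erase i, z j = (∏ i, z i)^(r-1) := by
      intro z hz
      apply Nat.eq_of_mul_eq_mul_left hz
      rw [hXE z]
      rw [← pow_succ']
      congr 1
      omega
    have hPle : ∏ i, ∏ j ∈ Finset.univ.erase i, (x i * x j)
        ≤ ∏ i, ∏ j ∈ Finset.univ.erase i, (y i * y j) := by
      apply Finset.prod_le_prod (fun i _ => Nat.zero_le _)
      intro i _
      apply Finset.prod_le_prod (fun j _ => Nat.zero_le _)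
      intro j hj
      exact hpair i j (Ne.symm (Finset.mem_erase.mp hj).1)
    rw [hP x, hP y, hEeq x hXpos, hEeq y hYpos, ← pow_add, ← pow_add] at hPle
    have hr1 : r - 1 + (r - 1) ≠ 0 := by omega
    exact (Nat.pow_le_pow_iff_left hr1).mp hPle
  calc ∏ i, (F i).card = ∏ i, x i := rfl
    _ ≤ ∏ i, y i := hXY
    _ = ∏ i, ∑ j ∈ Finset.range (kk i - t + 1), (n - t).choose (kk i - t - j) :=
        Finset.prod_congr rfl (fun i _ => (htarget i).symm)
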